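/- arXiv:1309.0247 — 3 statements merged into one kernel-verified Lean document; each statement's English description precedes it below -/
import Mathlib

section
/- Let φ(x) = Σ_{k∈ℤ²\{0}} φ̂_k e^{2πi k·x/L} be a mean-zero L-periodic function on [0,L]² with square-summable coefficients satisfying Σ |k|⁴|φ̂_k|² < ∞. Then for every N ≥ 3, the L∞ norm of φ is bounded by (8 + 2π log N)^{1/2}/(2π) times |∇φ| plus (√π κ₀ N)^{-1} times |Δφ|, where κ₀ = 2π/L, |∇φ|² = (2π/L)² Σ |k|²|φ̂_k|² · L², and |Δφ|² denotes the L² norm of the Laplacian. -/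
open Real Finset

lemma arctan_mvt {a b : ℝ} (ha : 0 ≤ a) (hab : a ≤ b) :
    (b - a) / (1 + b ^ 2) ≤ Real.arctan b - Real.arctan a := by
  have hdiff : ∀ x : ℝ, HasDerivAt (fun x => Real.arctan x - x / (1 + b ^ 2))
      (1 / (1 + x ^ 2) - 1 / (1 + b ^ 2)) x := fun x =>
    (Real.hasDerivAt_arctan x).sub ((hasDerivAt_id x).div_const _)
  have h : MonotoneOn (fun x => Real.arctan x - x / (1 + b ^ 2)) (Set.Icc 0 b) := by
    apply monotoneOn_of_deriv_nonneg (convex_Icc 0 b)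
    · exact Continuous.continuousOn (by continuity)
    · intro x hx
      exact (hdiff x).differentiableAt.differentiableWithinAt
    · intro x hx
      rw [interior_Icc] at hx
      rw [(hdiff x).deriv]
      have h1 : 1 + x ^ 2 ≤ 1 + b ^ 2 := by nlinarith [hx.1, hx.2]
      have h2 : (0:ℝ) < 1 + x ^ 2 := by positivity
      have h3 : (0:ℝ) < 1 + b ^ 2 := by positivity
      have := one_div_le_one_div_of_le h2 h1
      linarith
  have hb : 0 ≤ b := le_trans ha hab
  have key := h (Set.mem_Icc.mpr ⟨le_refl a |>.trans_eq rfl, hab⟩ |> fun _ => Set.mem_Icc.mpr ⟨ha, hab⟩) (Set.mem_Icc.mpr ⟨hb, le_refl b⟩) hab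
  simp only at key
  have : (b - a) / (1 + b ^ 2) = b / (1 + b^2) - a / (1 + b^2) := by ring
  linarith [key]

lemma telescope (c : ℝ) (n : ℕ) :
    ∑ j ∈ Finset.Icc 1 n, (Real.arctan ((j:ℝ)/c) - Real.arctan (((j:ℝ)-1)/c))
      = Real.arctan ((n:ℝ)/c) := by
  induction n with
  | zero => simp
  | succ n ih =>
    rw [Finset.sum_Icc_succ_top (by omega : 1 ≤ n + 1), ih]
    push_cast
    ring_nf

lemma key1 (m : ℕ) (hm : 1 ≤ m) :
    ∑ j ∈ Finset.Icc 1 m, (1:ℝ) / ((m:ℝ) ^ 2 + (j:ℝ) ^ 2) ≤ π / (4 * m) := by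
  have hm0 : (0:ℝ) < m := by exact_mod_cast hm
  have step : ∀ j ∈ Finset.Icc 1 m, (1:ℝ) / ((m:ℝ)^2 + (j:ℝ)^2) ≤
      (Real.arctan ((j:ℝ)/m) - Real.arctan (((j:ℝ)-1)/m)) / m := by
    intro j hj
    rw [Finset.mem_Icc] at hj
    have hj1 : (1:ℝ) ≤ (j:ℝ) := by exact_mod_cast hj.1
    have ha : (0:ℝ) ≤ ((j:ℝ)-1)/m := by
      apply div_nonneg (by linarith) hm0.le
    have hab : ((j:ℝ)-1)/m ≤ (j:ℝ)/m := by
      apply div_le_div_of_nonneg_right (by linarith) hm0.le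
    have h := arctan_mvt ha hab
    have heq : ((j:ℝ)/m - ((j:ℝ)-1)/m) / (1 + ((j:ℝ)/m)^2) = (m:ℝ) / ((m:ℝ)^2 + (j:ℝ)^2) := by
      field_simp
      ring
    rw [heq] at h
    have h2 : (m:ℝ) / ((m:ℝ)^2 + (j:ℝ)^2) / m ≤
        (Real.arctan ((j:ℝ)/m) - Real.arctan (((j:ℝ)-1)/m)) / m :=
      div_le_div_of_nonneg_right h hm0.le
    have heq2 : (m:ℝ) / ((m:ℝ)^2 + (j:ℝ)^2) / m = 1 / ((m:ℝ)^2 + (j:ℝ)^2) := by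
      field_simp
    rwa [heq2] at h2
  calc ∑ j ∈ Finset.Icc 1 m, (1:ℝ) / ((m:ℝ)^2 + (j:ℝ)^2)
      ≤ ∑ j ∈ Finset.Icc 1 m, (Real.arctan ((j:ℝ)/m) - Real.arctan (((j:ℝ)-1)/m)) / m :=
        Finset.sum_le_sum step
    _ = π / (4 * m) := by
        rw [← Finset.sum_div, telescope, div_self hm0.ne', Real.arctan_one]
        ring

noncomputable def qq (k : ℤ × ℤ) : ℝ := (k.1:ℝ)^2 + (k.2:ℝ)^2

lemma sum_Icc_neg (m : ℕ) (f : ℤ → ℝ) (hf : ∀ j, f (-j) = f j) :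
    ∑ j ∈ Finset.Icc (-(m:ℤ)) m, f j = f 0 + 2 * ∑ j ∈ Finset.Icc (1:ℤ) m, f j := by
  have hunion : Finset.Icc (-(m:ℤ)) m = Finset.Icc (-(m:ℤ)) (-1) ∪ Finset.Icc (0:ℤ) m := by
    ext j
    simp only [Finset.mem_Icc, Finset.mem_union]
    omega
  have hdisj : Disjoint (Finset.Icc (-(m:ℤ)) (-1)) (Finset.Icc (0:ℤ) m) := by
    rw [Finset.disjoint_left]
    intro j hj hj'
    simp only [Finset.mem_Icc] at hj hj'
    omega
  rw [hunion, Finset.sum_union hdisj]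
  have himage : Finset.Icc (-(m:ℤ)) (-1) = Finset.image Neg.neg (Finset.Icc (1:ℤ) m) := by
    ext j
    simp only [Finset.mem_Icc, Finset.mem_image]
    constructor
    · intro h; exact ⟨-j, by omega, by omega⟩
    · rintro ⟨i, hi, rfl⟩; omega
  rw [himage, Finset.sum_image (by intro a _ b _ h; omega)]
  simp only [hf]
  have h0 : Finset.Icc (0:ℤ) m = insert (0:ℤ) (Finset.Icc (1:ℤ) m) := by
    ext j
    simp only [Finset.mem_Icc, Finset.mem_insert]
    omega
  rw [h0, Finset.sum_insert (by simp)]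
  ring

lemma int_nat_sum (m : ℕ) (f : ℝ → ℝ) :
    ∑ j ∈ Finset.Icc (1:ℤ) (m:ℤ), f (j:ℝ) = ∑ j ∈ Finset.Icc (1:ℕ) m, f (j:ℝ) := by
  apply Finset.sum_nbij' (fun (j : ℤ) => j.toNat) (fun (j : ℕ) => (j:ℤ))
  all_goals intro a ha; simp only [Finset.mem_Icc] at *
  all_goals first
    | omega
    | (constructor <;> omega)
    | (congr 1; exact_mod_cast (Int.toNat_of_nonneg (by omega)).symm)

noncomputable def Bx (n : ℕ) : Finset (ℤ × ℤ) := Finset.Icc (-(n:ℤ)) n ×ˢ Finset.Icc (-(n:ℤ)) n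

lemma mem_Bx {n : ℕ} {k : ℤ × ℤ} : k ∈ Bx n ↔ |k.1| ≤ (n:ℤ) ∧ |k.2| ≤ (n:ℤ) := by
  simp [Bx, Finset.mem_product, Finset.mem_Icc, abs_le]

lemma Bx_mono {m n : ℕ} (h : m ≤ n) : Bx m ⊆ Bx n := by
  intro k hk
  rw [mem_Bx] at *
  omega

lemma line_bound (m : ℕ) (hm : 1 ≤ m) :
    ∑ j ∈ Finset.Icc (-(m:ℤ)) m, 1 / ((m:ℝ)^2 + (j:ℝ)^2) ≤ 1/(m:ℝ)^2 + π/(2*m) := by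
  have hm0 : (0:ℝ) < m := by exact_mod_cast hm
  rw [sum_Icc_neg m (fun j => 1 / ((m:ℝ)^2 + (j:ℝ)^2)) (by intro j; push_cast; ring_nf)]
  rw [int_nat_sum m (fun t => 1 / ((m:ℝ)^2 + t^2))]
  have := key1 m hm
  simp only [one_div] at this ⊢
  push_cast
  norm_num
  have h2 : π/(2*(m:ℝ)) = 2*(π/(4*(m:ℝ))) := by ring
  linarith [this]

lemma shell_bound (n : ℕ) (hn : 1 ≤ n) :
    ∑ k ∈ Bx (n+1) \ Bx n, 1/qq k ≤ 2*π/(n+1) + 4/((n:ℝ)+1)^2 := by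
  set m : ℕ := n + 1 with hm
  have hm1 : 1 ≤ m := by omega
  have hm0 : (0:ℝ) < m := by exact_mod_cast hm1
  set U : Finset (ℤ × ℤ) := ({(m:ℤ), -(m:ℤ)} : Finset ℤ) ×ˢ Finset.Icc (-(m:ℤ)) m with hU
  set V : Finset (ℤ × ℤ) := Finset.Icc (-(m:ℤ)) m ×ˢ ({(m:ℤ), -(m:ℤ)} : Finset ℤ) with hV
  have hnonneg : ∀ k : ℤ × ℤ, 0 ≤ 1/qq k := by
    intro k
    have : (0:ℝ) ≤ qq k := by unfold qq; positivity
    positivity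
  have hsub : Bx m \ Bx n ⊆ U ∪ V := by
    intro k hk
    rw [Finset.mem_sdiff] at hk
    obtain ⟨hk1, hk2⟩ := hk
    simp only [mem_Bx, abs_le] at hk1 hk2
    rw [Finset.mem_union, hU, hV, Finset.mem_product, Finset.mem_product]
    simp only [Finset.mem_insert, Finset.mem_singleton, Finset.mem_Icc]
    push_cast at hk1 hk2 ⊢
    omega
  have step1 : ∑ k ∈ Bx m \ Bx n, 1/qq k ≤ ∑ k ∈ U ∪ V, 1/qq k :=
    Finset.sum_le_sum_of_subset_of_nonneg hsub (fun k _ _ => hnonneg k)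
  have step2 : ∑ k ∈ U ∪ V, 1/qq k ≤ ∑ k ∈ U, 1/qq k + ∑ k ∈ V, 1/qq k := by
    have := Finset.sum_union_inter (s₁ := U) (s₂ := V) (f := fun k => 1/qq k)
    have hpos : 0 ≤ ∑ k ∈ U ∩ V, 1/qq k := Finset.sum_nonneg (fun k _ => hnonneg k)
    linarith
  have hmne : (m:ℤ) ≠ -(m:ℤ) := by omega
  have hline := line_bound m hm1
  have hUsum : ∑ k ∈ U, 1/qq k = 2 * ∑ j ∈ Finset.Icc (-(m:ℤ)) m, 1 / ((m:ℝ)^2 + (j:ℝ)^2) := by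
    rw [hU, Finset.sum_product, Finset.sum_pair hmne, Finset.mul_sum, ← Finset.sum_add_distrib]
    apply Finset.sum_congr rfl
    intro j hj
    unfold qq
    push_cast
    ring
  have hVsum : ∑ k ∈ V, 1/qq k = 2 * ∑ j ∈ Finset.Icc (-(m:ℤ)) m, 1 / ((m:ℝ)^2 + (j:ℝ)^2) := by
    rw [hV, Finset.sum_product, Finset.mul_sum]
    simp only [Finset.sum_pair hmne]
    apply Finset.sum_congr rfl
    intro j hj
    unfold qq
    push_cast
    ring
  have : (2*π/(m:ℝ) + 4/(m:ℝ)^2) = 2*π/((n:ℝ)+1) + 4/((n:ℝ)+1)^2 := by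
    rw [hm]; push_cast; ring_nf
  rw [← this]
  calc ∑ k ∈ Bx m \ Bx n, 1/qq k ≤ ∑ k ∈ U, 1/qq k + ∑ k ∈ V, 1/qq k := le_trans step1 step2
    _ = 4 * ∑ j ∈ Finset.Icc (-(m:ℤ)) m, 1 / ((m:ℝ)^2 + (j:ℝ)^2) := by rw [hUsum, hVsum]; ring
    _ ≤ 4 * (1/(m:ℝ)^2 + π/(2*m)) := by linarith
    _ = 2*π/(m:ℝ) + 4/(m:ℝ)^2 := by field_simp; ring

lemma qq_nonneg (k : ℤ × ℤ) : 0 ≤ qq k := by unfold qq; positivity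

lemma base_case : ∑ k ∈ Bx 2, 1/qq k = 9.1 := by
  have h : (Finset.Icc (-2:ℤ) 2) = {-2,-1,0,1,2} := by decide
  rw [show (Bx 2) = Finset.Icc (-2:ℤ) 2 ×ˢ Finset.Icc (-2:ℤ) 2 by rfl, h, Finset.sum_product]
  norm_num [qq]

lemma low (n : ℕ) (hn : 2 ≤ n) :
    ∑ k ∈ Bx n, 1/qq k ≤ 11.1 - 4/(n:ℝ) + 2*π*(Real.log n - Real.log 2) := by
  induction n, hn using Nat.le_induction with
  | base => rw [base_case]; norm_num
  | succ n hn ih =>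
    have hn0 : (0:ℝ) < n := by positivity
    have hn1 : (0:ℝ) < (n:ℝ) + 1 := by positivity
    have hsplit : ∑ k ∈ Bx (n+1), 1/qq k
        = ∑ k ∈ Bx n, 1/qq k + ∑ k ∈ Bx (n+1) \ Bx n, 1/qq k := by
      rw [← Finset.sum_sdiff (Bx_mono (Nat.le_succ n))]
      ring
    have hshell := shell_bound n (by omega)
    have hlog : 1/((n:ℝ)+1) ≤ Real.log ((n:ℝ)+1) - Real.log n := by
      have hx : (0:ℝ) < (n:ℝ)/((n:ℝ)+1) := by positivity
      have := Real.log_le_sub_one_of_pos hx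
      rw [Real.log_div hn0.ne' hn1.ne'] at this
      have heq : (n:ℝ)/((n:ℝ)+1) - 1 = -(1/((n:ℝ)+1)) := by field_simp; ring
      rw [heq] at this
      linarith
    have h2 : 4/((n:ℝ)+1)^2 ≤ 4/(n:ℝ) - 4/((n:ℝ)+1) := by
      rw [div_sub_div _ _ hn0.ne' hn1.ne']
      rw [div_le_div_iff₀ (by positivity) (by positivity)]
      nlinarith
    have hcast : ((n:ℝ)+1) = ((n+1 : ℕ) : ℝ) := by push_cast; ring
    have hpi : (0:ℝ) < π := Real.pi_pos
    rw [hsplit, ← hcast]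
    have : 2*π/((n:ℝ)+1) ≤ 2*π*(Real.log ((n:ℝ)+1) - Real.log n) := by
      rw [div_eq_mul_one_div]
      have := mul_le_mul_of_nonneg_left hlog (by linarith : (0:ℝ) ≤ 2*π)
      linarith
    linarith

lemma card_Bx (n : ℕ) : (Bx n).card = (2*n+1)^2 := by
  rw [show Bx n = Finset.Icc (-(n:ℤ)) n ×ˢ Finset.Icc (-(n:ℤ)) n from rfl,
    Finset.card_product, Int.card_Icc]
  have : ((n:ℤ) + 1 - -(n:ℤ)).toNat = 2*n+1 := by omega
  rw [this]
  ring

lemma highAux (n0 : ℕ) (hn0 : 1 ≤ n0) (M : ℕ) (hM : n0 ≤ M) :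
    ∑ k ∈ Bx M \ Bx n0, 1/(qq k)^2 ≤ 6/((n0:ℝ))^2 - 6/((M:ℝ))^2 := by
  induction M, hM using Nat.le_induction with
  | base => simp
  | succ M hM ih =>
    have hM0 : (0:ℝ) ≤ M := by positivity
    have hM1 : (0:ℝ) < (M:ℝ) + 1 := by positivity
    have hsub1 : Bx n0 ⊆ Bx M := Bx_mono hM
    have hsub2 : Bx M ⊆ Bx (M+1) := Bx_mono (Nat.le_succ M)
    -- decompose
    have hsplit : ∑ k ∈ Bx (M+1) \ Bx n0, 1/(qq k)^2
        = ∑ k ∈ Bx M \ Bx n0, 1/(qq k)^2 + ∑ k ∈ Bx (M+1) \ Bx M, 1/(qq k)^2 := by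
      have hdecomp : Bx (M+1) \ Bx n0 = (Bx M \ Bx n0) ∪ (Bx (M+1) \ Bx M) := by
        ext k
        simp only [Finset.mem_sdiff, Finset.mem_union]
        constructor
        · intro ⟨h1, h2⟩
          by_cases hc : k ∈ Bx M
          · exact Or.inl ⟨hc, h2⟩
          · exact Or.inr ⟨h1, hc⟩
        · rintro (⟨h1, h2⟩ | ⟨h1, h2⟩)
          · exact ⟨hsub2 h1, h2⟩
          · exact ⟨h1, fun hk => h2 (hsub1 hk)⟩
      have hdisj : Disjoint (Bx M \ Bx n0) (Bx (M+1) \ Bx M) := by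
        rw [Finset.disjoint_left]
        intro k hk hk'
        rw [Finset.mem_sdiff] at hk hk'
        exact hk'.2 hk.1
      rw [hdecomp, Finset.sum_union hdisj]
    -- shell bound
    have hshell : ∑ k ∈ Bx (M+1) \ Bx M, 1/(qq k)^2 ≤ (8*(M:ℝ)+8) / ((M:ℝ)+1)^4 := by
      have hcard : (Bx (M+1) \ Bx M).card = 8*M+8 := by
        rw [Finset.card_sdiff_of_subset hsub2, card_Bx, card_Bx]
        ring_nf
        omega
      have hbound : ∀ k ∈ Bx (M+1) \ Bx M, 1/(qq k)^2 ≤ 1/((M:ℝ)+1)^4 := by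
        intro k hk
        rw [Finset.mem_sdiff, mem_Bx, mem_Bx] at hk
        have hq : ((M:ℝ)+1)^2 ≤ qq k := by
          obtain ⟨h1, h2⟩ := hk
          rw [not_and_or] at h2
          unfold qq
          rcases h2 with h2 | h2
          · have : (M:ℤ)+1 ≤ |k.1| := by omega
            have hcast : ((M:ℝ)+1) ≤ |(k.1:ℝ)| := by
              rw [← Int.cast_abs]
              exact_mod_cast this
            nlinarith [sq_abs (k.1:ℝ), sq_nonneg (k.2:ℝ), abs_nonneg (k.1:ℝ)]
          · have : (M:ℤ)+1 ≤ |k.2| := by omega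
            have hcast : ((M:ℝ)+1) ≤ |(k.2:ℝ)| := by
              rw [← Int.cast_abs]
              exact_mod_cast this
            nlinarith [sq_abs (k.2:ℝ), sq_nonneg (k.1:ℝ), abs_nonneg (k.2:ℝ)]
        have hq0 : (0:ℝ) < ((M:ℝ)+1)^2 := by positivity
        have : ((M:ℝ)+1)^4 ≤ (qq k)^2 := by nlinarith
        apply one_div_le_one_div_of_le (by positivity) this
      calc ∑ k ∈ Bx (M+1) \ Bx M, 1/(qq k)^2
          ≤ ∑ k ∈ Bx (M+1) \ Bx M, 1/((M:ℝ)+1)^4 := Finset.sum_le_sum hbound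
        _ = (8*(M:ℝ)+8) / ((M:ℝ)+1)^4 := by
            rw [Finset.sum_const, hcard]
            push_cast
            ring
    have hnum : (8*(M:ℝ)+8) / ((M:ℝ)+1)^4 ≤ 6/((M:ℝ))^2 - 6/((M:ℝ)+1)^2 := by
      have hM0' : (0:ℝ) < M := by
        have : 1 ≤ M := le_trans hn0 hM
        exact_mod_cast this
      rw [div_sub_div _ _ (by positivity) (by positivity), div_le_div_iff₀ (by positivity) (by positivity)]
      have key : 8*(M:ℝ)^2 ≤ 6*(2*(M:ℝ)+1)*((M:ℝ)+1) := by nlinarith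
      nlinarith [mul_le_mul_of_nonneg_right key (show (0:ℝ) ≤ ((M:ℝ)+1)^3 by positivity)]
    have hc : ((M+1:ℕ):ℝ) = (M:ℝ)+1 := by push_cast; ring
    rw [hsplit, hc]
    linarith

lemma high (n0 : ℕ) (hn0 : 1 ≤ n0) (T : Finset (ℤ × ℤ)) (hT : ∀ k ∈ T, k ∉ Bx n0) :
    ∑ k ∈ T, 1/(qq k)^2 ≤ 6/((n0:ℝ))^2 := by
  set M : ℕ := n0 + T.sup (fun k => k.1.natAbs ⊔ k.2.natAbs) with hM
  have hsub : T ⊆ Bx M \ Bx n0 := by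
    intro k hk
    rw [Finset.mem_sdiff, mem_Bx]
    have h1 : k.1.natAbs ⊔ k.2.natAbs ≤ T.sup (fun k => k.1.natAbs ⊔ k.2.natAbs) :=
      Finset.le_sup (f := fun k : ℤ × ℤ => k.1.natAbs ⊔ k.2.natAbs) hk
    have h1a : k.1.natAbs ≤ T.sup (fun k => k.1.natAbs ⊔ k.2.natAbs) :=
      le_trans le_sup_left h1
    have h1b : k.2.natAbs ≤ T.sup (fun k => k.1.natAbs ⊔ k.2.natAbs) :=
      le_trans le_sup_right h1
    refine ⟨⟨?_, ?_⟩, hT k hk⟩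
    · rw [Int.abs_eq_natAbs]
      omega
    · rw [Int.abs_eq_natAbs]
      omega
  have h1 : ∑ k ∈ T, 1/(qq k)^2 ≤ ∑ k ∈ Bx M \ Bx n0, 1/(qq k)^2 := by
    apply Finset.sum_le_sum_of_subset_of_nonneg hsub
    intro k _ _
    have := qq_nonneg k
    positivity
  have h2 := highAux n0 hn0 M (by omega)
  have h3 : (0:ℝ) ≤ 6/((M:ℝ))^2 := by positivity
  linarith

lemma summable_aux : Summable (fun n : ℤ => 1/(1+(n:ℝ)^2)) := by
  have h : Summable (fun n : ℤ => 1/(n:ℝ)^2 + (if n = 0 then (1:ℝ) else 0)) := by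
    apply Summable.add
    · exact_mod_cast summable_one_div_int_pow.mpr one_lt_two
    · apply summable_of_ne_finset_zero (s := {0})
      intro n hn
      simp only [Finset.mem_singleton] at hn
      simp [hn]
  apply Summable.of_nonneg_of_le (fun n => by positivity) ?_ h
  intro n
  by_cases hn : n = 0
  · simp [hn]
  · have h1 : (1:ℝ) ≤ (n:ℝ)^2 := by
      have : 1 ≤ |n| := by rw [Int.abs_eq_natAbs]; omega
      have : (1:ℝ) ≤ |(n:ℝ)| := by rw [← Int.cast_abs]; exact_mod_cast this
      nlinarith [abs_nonneg (n:ℝ), sq_abs (n:ℝ)]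
    simp only [hn, if_neg, ite_false, add_zero]
    apply one_div_le_one_div_of_le (by positivity)
    linarith

lemma qq_sq_bound (k : ℤ × ℤ) :
    1/(qq k)^2 ≤ 4 * ((1/(1+(k.1:ℝ)^2)) * (1/(1+(k.2:ℝ)^2))) := by
  by_cases hk : k = 0
  · subst hk
    norm_num [qq]
  · have h1 : (1+(k.1:ℝ)^2)/2 ≤ qq k := by
      by_cases h : k.1 = 0
      · have h2 : k.2 ≠ 0 := by
          intro h2
          exact hk (Prod.ext h h2)
        have : (1:ℝ) ≤ (k.2:ℝ)^2 := by
          have : 1 ≤ |k.2| := by rw [Int.abs_eq_natAbs]; omega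
          have : (1:ℝ) ≤ |(k.2:ℝ)| := by rw [← Int.cast_abs]; exact_mod_cast this
          nlinarith [abs_nonneg (k.2:ℝ), sq_abs (k.2:ℝ)]
        unfold qq
        rw [h]
        push_cast
        nlinarith
      · have : (1:ℝ) ≤ (k.1:ℝ)^2 := by
          have : 1 ≤ |k.1| := by rw [Int.abs_eq_natAbs]; omega
          have : (1:ℝ) ≤ |(k.1:ℝ)| := by rw [← Int.cast_abs]; exact_mod_cast this
          nlinarith [abs_nonneg (k.1:ℝ), sq_abs (k.1:ℝ)]
        unfold qq
        nlinarith [sq_nonneg (k.2:ℝ)]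
    have h2 : (1+(k.2:ℝ)^2)/2 ≤ qq k := by
      by_cases h : k.2 = 0
      · have h2 : k.1 ≠ 0 := by
          intro h2
          exact hk (Prod.ext h2 h)
        have : (1:ℝ) ≤ (k.1:ℝ)^2 := by
          have : 1 ≤ |k.1| := by rw [Int.abs_eq_natAbs]; omega
          have : (1:ℝ) ≤ |(k.1:ℝ)| := by rw [← Int.cast_abs]; exact_mod_cast this
          nlinarith [abs_nonneg (k.1:ℝ), sq_abs (k.1:ℝ)]
        unfold qq
        rw [h]
        push_cast
        nlinarith
      · have : (1:ℝ) ≤ (k.2:ℝ)^2 := by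
          have : 1 ≤ |k.2| := by rw [Int.abs_eq_natAbs]; omega
          have : (1:ℝ) ≤ |(k.2:ℝ)| := by rw [← Int.cast_abs]; exact_mod_cast this
          nlinarith [abs_nonneg (k.2:ℝ), sq_abs (k.2:ℝ)]
        unfold qq
        nlinarith [sq_nonneg (k.1:ℝ)]
    have hp1 : (0:ℝ) < 1+(k.1:ℝ)^2 := by positivity
    have hp2 : (0:ℝ) < 1+(k.2:ℝ)^2 := by positivity
    have hq : (0:ℝ) < qq k := by nlinarith
    have hprod : (1+(k.1:ℝ)^2) * (1+(k.2:ℝ)^2) / 4 ≤ (qq k)^2 := by nlinarith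
    have : 1/(qq k)^2 ≤ 1/((1+(k.1:ℝ)^2) * (1+(k.2:ℝ)^2) / 4) :=
      one_div_le_one_div_of_le (by positivity) hprod
    calc 1/(qq k)^2 ≤ 1/((1+(k.1:ℝ)^2) * (1+(k.2:ℝ)^2) / 4) := this
      _ = 4 * ((1/(1+(k.1:ℝ)^2)) * (1/(1+(k.2:ℝ)^2))) := by field_simp

lemma summable_inv_qq_sq : Summable (fun k : ℤ × ℤ => 1/(qq k)^2) := by
  apply Summable.of_nonneg_of_le (fun k => by have := qq_nonneg k; positivity) qq_sq_bound
  apply Summable.mul_left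
  exact (summable_aux.mul_of_nonneg summable_aux (fun n => by positivity) (fun n => by positivity))
lemma qq_zero {k : ℤ × ℤ} (h : qq k = 0) : k = 0 := by
  unfold qq at h
  have h1 : (k.1:ℝ) = 0 := by nlinarith [sq_nonneg (k.1:ℝ), sq_nonneg (k.2:ℝ)]
  have h2 : (k.2:ℝ) = 0 := by nlinarith [sq_nonneg (k.1:ℝ), sq_nonneg (k.2:ℝ)]
  have h1' : k.1 = 0 := by exact_mod_cast h1
  have h2' : k.2 = 0 := by exact_mod_cast h2
  exact Prod.ext h1' h2'

lemma qq_pos {k : ℤ × ℤ} (h : k ≠ 0) : 0 < qq k :=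
  lt_of_le_of_ne (qq_nonneg k) (fun hq => h (qq_zero hq.symm))

lemma cs_helper (a w : (ℤ × ℤ) → ℝ) (ha : ∀ k, 0 ≤ a k) (hw : ∀ k, 0 ≤ w k)
    (hz : ∀ k, w k = 0 → a k = 0) (s : Finset (ℤ × ℤ)) :
    ∑ k ∈ s, a k ≤ Real.sqrt (∑ k ∈ s, 1 / w k) * Real.sqrt (∑ k ∈ s, w k * a k ^ 2) := by
  have key : ∀ k ∈ s, a k = Real.sqrt (1 / w k) * Real.sqrt (w k * a k ^ 2) := by
    intro k _
    by_cases h : w k = 0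
    · simp [h, hz k h]
    · have hw' : 0 < w k := lt_of_le_of_ne (hw k) (Ne.symm h)
      rw [← Real.sqrt_mul (by positivity)]
      rw [show 1 / w k * (w k * a k ^ 2) = a k ^ 2 by field_simp]
      rw [Real.sqrt_sq (ha k)]
  rw [Finset.sum_congr rfl key]
  exact Real.sum_sqrt_mul_sqrt_le s (fun k => one_div_nonneg.mpr (hw k))
    (fun k => mul_nonneg (hw k) (sq_nonneg _))

/-- Brézis–Gallouet type interpolation inequality for a mean-zero `L`-periodic
function given by its Fourier series `φ(x) = Σ_k φ̂_k e^{2πi k·x/L}`. -/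
theorem stmt_6 (L : ℝ) (hL : 0 < L) (φhat : ℤ × ℤ → ℂ) (h0 : φhat 0 = 0)
    (hsum : Summable fun k : ℤ × ℤ => (((k.1 : ℝ) ^ 2 + (k.2 : ℝ) ^ 2)) ^ 2 * ‖φhat k‖ ^ 2)
    (hsq : Summable fun k : ℤ × ℤ => ‖φhat k‖ ^ 2)
    (N : ℝ) (hN : 3 ≤ N) (x : ℝ × ℝ) :
    ‖∑' k : ℤ × ℤ,
        φhat k * Complex.exp (2 * π * Complex.I *
          (((k.1 : ℝ) * x.1 + (k.2 : ℝ) * x.2) / L))‖ ≤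
      (Real.sqrt (8 + 2 * π * Real.log N) / (2 * π)) *
        Real.sqrt ((2 * π / L) ^ 2 * L ^ 2 *
          ∑' k : ℤ × ℤ, ((k.1 : ℝ) ^ 2 + (k.2 : ℝ) ^ 2) * ‖φhat k‖ ^ 2) +
      (1 / (Real.sqrt π * (2 * π / L) * N)) *
        Real.sqrt ((2 * π / L) ^ 4 * L ^ 2 *
          ∑' k : ℤ × ℤ, ((k.1 : ℝ) ^ 2 + (k.2 : ℝ) ^ 2) ^ 2 * ‖φhat k‖ ^ 2) := by
  have hπ : (0:ℝ) < π := Real.pi_pos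
  have hN0 : (0:ℝ) < N := by linarith
  set a : ℤ × ℤ → ℝ := fun k => ‖φhat k‖ with ha_def
  have ha : ∀ k, 0 ≤ a k := fun k => norm_nonneg _
  have ha0 : a 0 = 0 := by simp [ha_def, h0]
  have hqq : ∀ k : ℤ × ℤ, qq k = (k.1:ℝ)^2 + (k.2:ℝ)^2 := fun k => rfl
  -- summability
  have hS2sum : Summable (fun k : ℤ × ℤ => (qq k)^2 * a k^2) := by
    apply hsum.congr
    intro k
    rw [hqq]
  have hS1sum : Summable (fun k : ℤ × ℤ => qq k * a k^2) := by
    apply Summable.of_nonneg_of_le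
      (fun k => mul_nonneg (qq_nonneg k) (sq_nonneg _)) ?_ (hsq.add hS2sum)
    intro k
    have h1 := qq_nonneg k
    nlinarith [sq_nonneg (a k), sq_nonneg (qq k - 1),
      mul_nonneg (mul_nonneg (sq_nonneg (qq k - 1)) (sq_nonneg (a k))) (le_refl (0:ℝ)),
      mul_nonneg (sq_nonneg (qq k - 1)) (sq_nonneg (a k))]
  have hAsum : Summable a := by
    apply Summable.of_nonneg_of_le ha ?_
      ((summable_inv_qq_sq.mul_left (1/2)).add (hS2sum.mul_left (1/2)))
    intro k
    by_cases hk : k = 0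
    · rw [hk, ha0]
      have h2 : (0:ℝ) ≤ 1/(qq (0:ℤ×ℤ))^2 := one_div_nonneg.mpr (sq_nonneg _)
      have h3 : (0:ℝ) ≤ (qq (0:ℤ×ℤ))^2 * a (0:ℤ×ℤ)^2 :=
        mul_nonneg (sq_nonneg _) (sq_nonneg _)
      rw [ha0] at h3
      linarith
    · have hq : 0 < qq k := qq_pos hk
      have expand : (1/qq k - qq k * a k)^2
          = 1/(qq k)^2 - 2*a k + (qq k)^2 * a k^2 := by
        field_simp
        ring
      have h4 := sq_nonneg (1/qq k - qq k * a k)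
      rw [expand] at h4
      linarith
  set n0 : ℕ := ⌊N⌋₊ with hn0_def
  have hn03 : 3 ≤ n0 := Nat.le_floor (by exact_mod_cast hN)
  have hn0N : (n0:ℝ) ≤ N := Nat.floor_le hN0.le
  have hNlt : N < (n0:ℝ) + 1 := by exact_mod_cast Nat.lt_floor_add_one N
  have hn0pos : (0:ℝ) < n0 := by
    have : 0 < n0 := by omega
    exact_mod_cast this
  -- low bound
  have hlowB : ∑ k ∈ Bx n0, 1/qq k ≤ 8 + 2*π*Real.log N := by
    have h1 := low n0 (by omega)
    have hlog : Real.log n0 ≤ Real.log N := Real.log_le_log hn0pos hn0N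
    have hl2 := Real.log_two_gt_d9
    have hpi3 := Real.pi_gt_three
    have hpos : (0:ℝ) < 4/(n0:ℝ) := by positivity
    nlinarith [mul_le_mul_of_nonneg_left hlog (by linarith : (0:ℝ) ≤ 2*π),
      mul_lt_mul_of_pos_left hl2 (by linarith : (0:ℝ) < 2*π)]
  -- high bound
  have hhighB : ∀ T : Finset (ℤ × ℤ), (∀ k ∈ T, k ∉ Bx n0) →
      ∑ k ∈ T, 1/(qq k)^2 ≤ 4*π/N^2 := by
    intro T hT
    have h1 := high n0 (by omega) T hT
    have h2 : 6/(n0:ℝ)^2 ≤ 4*π/N^2 := by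
      rw [div_le_div_iff₀ (by positivity) (by positivity)]
      have hN43 : N ≤ (4/3)*(n0:ℝ) := by
        have h3 : (3:ℝ) ≤ (n0:ℝ) := by exact_mod_cast hn03
        linarith
      have hpi3 := Real.pi_gt_three
      nlinarith [sq_nonneg (n0:ℝ), mul_le_mul_of_nonneg_left hN43 hN0.le]
    linarith
  set S1 : ℝ := ∑' k : ℤ × ℤ, ((k.1:ℝ)^2 + (k.2:ℝ)^2) * ‖φhat k‖^2 with hS1_def
  set S2 : ℝ := ∑' k : ℤ × ℤ, ((k.1:ℝ)^2 + (k.2:ℝ)^2)^2 * ‖φhat k‖^2 with hS2_def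
  have hS1eq : S1 = ∑' k : ℤ × ℤ, qq k * a k^2 := by
    rw [hS1_def]
    exact tsum_congr (fun k => by rw [hqq])
  have hS2eq : S2 = ∑' k : ℤ × ℤ, (qq k)^2 * a k^2 := by
    rw [hS2_def]
    exact tsum_congr (fun k => by rw [hqq])
  have hS1nn : 0 ≤ S1 := by
    rw [hS1eq]
    exact tsum_nonneg (fun k => mul_nonneg (qq_nonneg k) (sq_nonneg _))
  have hS2nn : 0 ≤ S2 := by
    rw [hS2eq]
    exact tsum_nonneg (fun k => mul_nonneg (sq_nonneg _) (sq_nonneg _))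
  have hE : (0:ℝ) ≤ 8 + 2*π*Real.log N := by
    have : (0:ℝ) ≤ Real.log N := Real.log_nonneg (by linarith)
    positivity
  -- key estimate
  have key : ∑' k, a k ≤ Real.sqrt (8 + 2*π*Real.log N) * Real.sqrt S1
      + (2*Real.sqrt π/N) * Real.sqrt S2 := by
    apply Summable.tsum_le_of_sum_le hAsum
    intro F
    have hsplit : ∑ k ∈ F ∩ Bx n0, a k + ∑ k ∈ F \ Bx n0, a k = ∑ k ∈ F, a k :=
      Finset.sum_inter_add_sum_sdiff F (Bx n0) a
    have hzlow : ∀ k : ℤ × ℤ, qq k = 0 → a k = 0 := fun k hk => by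
      rw [qq_zero hk, ha0]
    have hzhigh : ∀ k : ℤ × ℤ, (qq k)^2 = 0 → a k = 0 := fun k hk => by
      rw [qq_zero (pow_eq_zero_iff (by norm_num) |>.mp hk), ha0]
    -- low part
    have e1 := cs_helper a qq ha qq_nonneg hzlow (F ∩ Bx n0)
    have e2 : Real.sqrt (∑ k ∈ F ∩ Bx n0, 1/qq k) ≤ Real.sqrt (8 + 2*π*Real.log N) := by
      apply Real.sqrt_le_sqrt
      refine le_trans (Finset.sum_le_sum_of_subset_of_nonneg
        (Finset.inter_subset_right) ?_) hlowB
      intro k _ _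
      have := qq_nonneg k
      positivity
    have e3 : Real.sqrt (∑ k ∈ F ∩ Bx n0, qq k * a k^2) ≤ Real.sqrt S1 := by
      apply Real.sqrt_le_sqrt
      rw [hS1eq]
      exact Summable.sum_le_tsum _ (fun k _ => mul_nonneg (qq_nonneg k) (sq_nonneg _)) hS1sum
    have elow : ∑ k ∈ F ∩ Bx n0, a k ≤
        Real.sqrt (8 + 2*π*Real.log N) * Real.sqrt S1 :=
      le_trans e1 (mul_le_mul e2 e3 (Real.sqrt_nonneg _) (Real.sqrt_nonneg _))
    -- high part
    have f1 := cs_helper a (fun k => (qq k)^2) ha (fun k => sq_nonneg _) hzhigh (F \ Bx n0)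
    have f2 : Real.sqrt (∑ k ∈ F \ Bx n0, 1/(qq k)^2) ≤ 2*Real.sqrt π/N := by
      have hb := hhighB (F \ Bx n0) (fun k hk => (Finset.mem_sdiff.mp hk).2)
      have hsq : Real.sqrt (4*π/N^2) = 2*Real.sqrt π/N := by
        rw [show 4*π/N^2 = (2*Real.sqrt π/N)^2 by
          rw [div_pow, mul_pow, Real.sq_sqrt hπ.le]; norm_num]
        exact Real.sqrt_sq (by positivity)
      rw [← hsq]
      exact Real.sqrt_le_sqrt hb
    have f3 : Real.sqrt (∑ k ∈ F \ Bx n0, (qq k)^2 * a k^2) ≤ Real.sqrt S2 := by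
      apply Real.sqrt_le_sqrt
      rw [hS2eq]
      exact Summable.sum_le_tsum _ (fun k _ => mul_nonneg (sq_nonneg _) (sq_nonneg _)) hS2sum
    have ehigh : ∑ k ∈ F \ Bx n0, a k ≤ (2*Real.sqrt π/N) * Real.sqrt S2 :=
      le_trans f1 (mul_le_mul f2 f3 (Real.sqrt_nonneg _) (by positivity))
    linarith
  -- LHS ≤ ∑' a
  have hnorm : ∀ k : ℤ × ℤ, ‖φhat k * Complex.exp (2 * π * Complex.I *
      (((k.1 : ℝ) * x.1 + (k.2 : ℝ) * x.2) / L))‖ = a k := by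
    intro k
    rw [norm_mul]
    have hexp : (2 * (π:ℂ) * Complex.I * (((k.1 : ℝ) * x.1 + (k.2 : ℝ) * x.2) / L : ℂ))
        = ((2*π*(((k.1:ℝ) * x.1 + (k.2:ℝ) * x.2) / L) : ℝ) : ℂ) * Complex.I := by
      push_cast
      ring
    rw [hexp, Complex.norm_exp_ofReal_mul_I, mul_one]
  have hLHS : ‖∑' k : ℤ × ℤ, φhat k * Complex.exp (2 * π * Complex.I *
      (((k.1 : ℝ) * x.1 + (k.2 : ℝ) * x.2) / L))‖ ≤ ∑' k, a k := by
    have hsm : Summable (fun k : ℤ × ℤ => ‖φhat k * Complex.exp (2 * π * Complex.I *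
        (((k.1 : ℝ) * x.1 + (k.2 : ℝ) * x.2) / L))‖) := by
      apply hAsum.congr
      intro k
      exact (hnorm k).symm
    calc ‖∑' k : ℤ × ℤ, φhat k * Complex.exp (2 * π * Complex.I *
        (((k.1 : ℝ) * x.1 + (k.2 : ℝ) * x.2) / L))‖
        ≤ ∑' k : ℤ × ℤ, ‖φhat k * Complex.exp (2 * π * Complex.I *
          (((k.1 : ℝ) * x.1 + (k.2 : ℝ) * x.2) / L))‖ := norm_tsum_le_tsum_norm hsm
      _ = ∑' k, a k := tsum_congr hnorm
  -- final algebra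
  have hL0 : L ≠ 0 := hL.ne'
  have e1 : Real.sqrt ((2*π/L)^2 * L^2 * S1) = (2*π) * Real.sqrt S1 := by
    rw [show (2*π/L)^2 * L^2 * S1 = (2*π)^2 * S1 by field_simp]
    rw [Real.sqrt_mul (by positivity), Real.sqrt_sq (by positivity)]
  have e2 : Real.sqrt ((2*π/L)^4 * L^2 * S2) = ((2*π)^2/L) * Real.sqrt S2 := by
    rw [show (2*π/L)^4 * L^2 * S2 = ((2*π)^2/L)^2 * S2 by field_simp]
    rw [Real.sqrt_mul (by positivity), Real.sqrt_sq (by positivity)]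
  have hsπ : (0:ℝ) < Real.sqrt π := Real.sqrt_pos.mpr hπ
  have hmulπ : Real.sqrt π * Real.sqrt π = π := Real.mul_self_sqrt hπ.le
  calc ‖∑' k : ℤ × ℤ, φhat k * Complex.exp (2 * π * Complex.I *
      (((k.1 : ℝ) * x.1 + (k.2 : ℝ) * x.2) / L))‖
      ≤ ∑' k, a k := hLHS
    _ ≤ Real.sqrt (8 + 2*π*Real.log N) * Real.sqrt S1
        + (2*Real.sqrt π/N) * Real.sqrt S2 := key
    _ = (Real.sqrt (8 + 2 * π * Real.log N) / (2 * π)) *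
          Real.sqrt ((2*π/L)^2 * L^2 * S1) +
        (1 / (Real.sqrt π * (2 * π / L) * N)) *
          Real.sqrt ((2*π/L)^4 * L^2 * S2) := by
        rw [e1, e2]
        set sπ := Real.sqrt π with hsπd
        rw [show π = sπ^2 by rw [hsπd, Real.sq_sqrt hπ.le]]
        have hsπ0 : sπ ≠ 0 := ne_of_gt hsπ
        field_simp
end

section
/- Let α, β be locally integrable real-valued functions on (0,∞) such that for some T > 0: liminf_{t→∞} (1/T)∫_t^{t+T} α = γ > 0, limsup_{t→∞} (1/T)∫_t^{t+T} α⁻ < ∞, and lim_{t→∞} (1/T)∫_t^{t+T} β⁺ = 0, where α⁻ = max{-α,0} and β⁺ = max{β,0}. If ξ is an absolutely continuous nonnegative function on (0,∞) satisfying ξ' + αξ ≤ β almost everywhere, then ξ(t) → 0 as t → ∞. -/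
open MeasureTheory Filter
open Set

lemma fubini_key (a b : ℝ) (u v : ℝ → ℝ)
    (hu : IntegrableOn u (Ioc a b)) (hv : IntegrableOn v (Ioc a b)) :
    (∫ s in Ioc a b, u s) * (∫ t in Ioc a b, v t)
      = (∫ s in Ioc a b, u s * ∫ t in Ioc a s, v t)
        + ∫ s in Ioc a b, (∫ t in Ioc a s, u t) * v s := by
  set μ := volume.restrict (Ioc a b) with hμ
  have hprod : Integrable (fun p : ℝ × ℝ => u p.1 * v p.2) (μ.prod μ) := hu.mul_prod hv
  have hs1 : MeasurableSet {p : ℝ × ℝ | p.2 ≤ p.1} := measurableSet_le measurable_snd measurable_fst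
  have hsplit : (∫ p : ℝ × ℝ, u p.1 * v p.2 ∂(μ.prod μ))
      = (∫ p in {p : ℝ × ℝ | p.2 ≤ p.1}, u p.1 * v p.2 ∂(μ.prod μ))
        + ∫ p in {p : ℝ × ℝ | p.2 ≤ p.1}ᶜ, u p.1 * v p.2 ∂(μ.prod μ) :=
    (integral_add_compl hs1 hprod).symm
  have h1 : (∫ p in {p : ℝ × ℝ | p.2 ≤ p.1}, u p.1 * v p.2 ∂(μ.prod μ))
      = ∫ s in Ioc a b, u s * ∫ t in Ioc a s, v t := by
    rw [← integral_indicator hs1]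
    rw [integral_prod _ (hprod.indicator hs1)]
    refine setIntegral_congr_fun measurableSet_Ioc fun x hx => ?_
    have : ∀ y : ℝ, ({p : ℝ × ℝ | p.2 ≤ p.1}.indicator (fun p => u p.1 * v p.2)) (x, y)
        = (Iic x).indicator (fun y => u x * v y) y := by
      intro y
      by_cases h : y ≤ x <;> simp [indicator, h]
    simp_rw [this]
    rw [integral_indicator measurableSet_Iic, hμ, Measure.restrict_restrict measurableSet_Iic]
    have : Iic x ∩ Ioc a b = Ioc a x := by
      ext y; simp only [mem_inter_iff, mem_Iic, mem_Ioc]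
      exact ⟨fun h => ⟨h.2.1, h.1⟩, fun h => ⟨h.2, h.1, h.2.trans hx.2⟩⟩
    rw [this, integral_const_mul]
  have h2 : (∫ p in {p : ℝ × ℝ | p.2 ≤ p.1}ᶜ, u p.1 * v p.2 ∂(μ.prod μ))
      = ∫ s in Ioc a b, (∫ t in Ioc a s, u t) * v s := by
    rw [← integral_indicator hs1.compl]
    rw [integral_prod_symm _ (hprod.indicator hs1.compl)]
    refine setIntegral_congr_fun measurableSet_Ioc fun y hy => ?_
    have : ∀ x : ℝ, ({p : ℝ × ℝ | p.2 ≤ p.1}ᶜ.indicator (fun p => u p.1 * v p.2)) (x, y)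
        = (Iio y).indicator (fun x => u x * v y) x := by
      intro x
      rcases lt_or_ge x y with h | h
      · simp [indicator, h, not_le.mpr h]
      · simp [indicator, h, not_lt.mpr h]
    simp_rw [this]
    rw [integral_indicator measurableSet_Iio, hμ, Measure.restrict_restrict measurableSet_Iio]
    have : Iio y ∩ Ioc a b = Ioo a y := by
      ext x; simp only [mem_inter_iff, mem_Iio, mem_Ioc, mem_Ioo]
      exact ⟨fun h => ⟨h.2.1, h.1⟩, fun h => ⟨h.2, h.1, h.2.le.trans hy.2⟩⟩
    rw [this, integral_mul_const, ← integral_Ioc_eq_integral_Ioo]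
  rw [← h1, ← h2, ← hsplit, integral_prod_mul]

lemma prod_rule (a b : ℝ) (hab : a ≤ b) (u v f g : ℝ → ℝ)
    (hu : IntegrableOn u (Icc a b)) (hv : IntegrableOn v (Icc a b))
    (hf : ∀ t ∈ Icc a b, f t = f a + ∫ s in Ioc a t, u s)
    (hg : ∀ t ∈ Icc a b, g t = g a + ∫ s in Ioc a t, v s) :
    f b * g b = f a * g a + ((∫ s in Ioc a b, u s * g s) + ∫ s in Ioc a b, f s * v s) := by
  have hu' : IntegrableOn u (Ioc a b) := hu.mono_set Ioc_subset_Icc_self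
  have hv' : IntegrableOn v (Ioc a b) := hv.mono_set Ioc_subset_Icc_self
  set F : ℝ → ℝ := fun x => ∫ s in Ioc a x, u s with hF
  set G : ℝ → ℝ := fun x => ∫ s in Ioc a x, v s with hG
  have hFc : ContinuousOn F (Icc a b) := intervalIntegral.continuousOn_primitive hu
  have hGc : ContinuousOn G (Icc a b) := intervalIntegral.continuousOn_primitive hv
  obtain ⟨CF, hCF⟩ := (isCompact_Icc : IsCompact (Icc a b)).exists_bound_of_continuousOn hFc
  obtain ⟨CG, hCG⟩ := (isCompact_Icc : IsCompact (Icc a b)).exists_bound_of_continuousOn hGc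
  have hFm : AEStronglyMeasurable F (volume.restrict (Ioc a b)) :=
    (hFc.mono Ioc_subset_Icc_self).aestronglyMeasurable measurableSet_Ioc
  have hGm : AEStronglyMeasurable G (volume.restrict (Ioc a b)) :=
    (hGc.mono Ioc_subset_Icc_self).aestronglyMeasurable measurableSet_Ioc
  have hGbd : ∀ᵐ x ∂(volume.restrict (Ioc a b)), ‖G x‖ ≤ CG := by
    filter_upwards [ae_restrict_mem measurableSet_Ioc] with x hx
    exact hCG x (Ioc_subset_Icc_self hx)
  have hFbd : ∀ᵐ x ∂(volume.restrict (Ioc a b)), ‖F x‖ ≤ CF := by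
    filter_upwards [ae_restrict_mem measurableSet_Ioc] with x hx
    exact hCF x (Ioc_subset_Icc_self hx)
  have huG : Integrable (fun s => u s * G s) (volume.restrict (Ioc a b)) := by
    have := hu'.bdd_mul hGm hGbd
    simpa only [mul_comm] using this
  have hFv : Integrable (fun s => F s * v s) (volume.restrict (Ioc a b)) :=
    hv'.bdd_mul hFm hFbd
  have e1 : (∫ s in Ioc a b, u s * g s)
      = g a * (∫ s in Ioc a b, u s) + ∫ s in Ioc a b, u s * G s := by
    have hc : ∀ s ∈ Ioc a b, u s * g s = g a * u s + u s * G s := fun s hs => by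
      rw [hg s (Ioc_subset_Icc_self hs)]; ring
    rw [setIntegral_congr_fun measurableSet_Ioc hc, integral_add (hu'.const_mul _) huG,
      integral_const_mul]
  have e2 : (∫ s in Ioc a b, f s * v s)
      = f a * (∫ s in Ioc a b, v s) + ∫ s in Ioc a b, F s * v s := by
    have hc : ∀ s ∈ Ioc a b, f s * v s = f a * v s + F s * v s := fun s hs => by
      rw [hf s (Ioc_subset_Icc_self hs)]; ring
    rw [setIntegral_congr_fun measurableSet_Ioc hc, integral_add (hv'.const_mul _) hFv,
      integral_const_mul]
  have hfb := hf b ⟨hab, le_rfl⟩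
  have hgb := hg b ⟨hab, le_rfl⟩
  have hF2 := fubini_key a b u v hu' hv'
  rw [hfb, hgb, e1, e2]
  linear_combination hF2

lemma integrableOn_mul_cont {a b : ℝ} (t : ℝ) (ht : t ∈ Icc a b) (α g : ℝ → ℝ)
    (hα : IntegrableOn α (Icc a b)) (hg : ContinuousOn g (Icc a b)) :
    IntegrableOn (fun s => α s * g s) (Icc a t) := by
  have hα' : IntegrableOn α (Icc a t) := hα.mono_set (Icc_subset_Icc le_rfl ht.2)
  obtain ⟨C, hC⟩ := (isCompact_Icc : IsCompact (Icc a b)).exists_bound_of_continuousOn hg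
  have hsub : Icc a t ⊆ Icc a b := Icc_subset_Icc le_rfl ht.2
  have hm : AEStronglyMeasurable g (volume.restrict (Icc a t)) :=
    (hg.mono hsub).aestronglyMeasurable measurableSet_Icc
  have hbd : ∀ᵐ x ∂(volume.restrict (Icc a t)), ‖g x‖ ≤ C := by
    filter_upwards [ae_restrict_mem measurableSet_Icc] with x hx
    exact hC x (hsub hx)
  have := hα'.bdd_mul hm hbd
  simpa only [mul_comm, IntegrableOn] using this

lemma pow_rule (a b : ℝ) (α : ℝ → ℝ) (hα : IntegrableOn α (Icc a b)) (n : ℕ) :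
    ∀ t ∈ Icc a b, (∫ s in Ioc a t, α s) ^ (n + 1)
      = ∫ s in Ioc a t, ((n : ℝ) + 1) * (α s * (∫ r in Ioc a s, α r) ^ n) := by
  set A : ℝ → ℝ := fun x => ∫ s in Ioc a x, α s with hA
  have hAc : ContinuousOn A (Icc a b) := intervalIntegral.continuousOn_primitive hα
  have hAa : A a = 0 := by simp [hA]
  induction n with
  | zero =>
    intro t ht
    rw [pow_one]
    refine (setIntegral_congr_fun measurableSet_Ioc fun s hs => ?_).symm
    simp
  | succ n ih =>
    intro t ht
    have hsub : Icc a t ⊆ Icc a b := Icc_subset_Icc le_rfl ht.2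
    have hint : IntegrableOn (fun s => α s * A s ^ (n + 1)) (Icc a t) :=
      integrableOn_mul_cont t ht α _ hα (hAc.pow _)
    have key := prod_rule a t ht.1 α
      (fun s => ((n : ℝ) + 1) * (α s * A s ^ n)) A (fun x => A x ^ (n + 1))
      (hα.mono_set hsub)
      ((integrableOn_mul_cont t ht α _ hα (hAc.pow n)).const_mul _)
      (fun t' ht' => by show A t' = A a + _; rw [hAa]; ring_nf; rfl)
      (fun t' ht' => by
        show A t' ^ (n + 1) = A a ^ (n + 1) + _
        rw [hAa, zero_pow (Nat.succ_ne_zero n), zero_add]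
        exact ih t' (hsub ht'))
    simp only [hAa, zero_pow (Nat.succ_ne_zero n), zero_mul, mul_zero, zero_add] at key
    have e3 : (∫ s in Ioc a t, A s * (((n : ℝ) + 1) * (α s * A s ^ n)))
        = ((n : ℝ) + 1) * ∫ s in Ioc a t, α s * A s ^ (n + 1) := by
      rw [← integral_const_mul]
      refine setIntegral_congr_fun measurableSet_Ioc fun s hs => ?_
      ring
    rw [e3] at key
    have e4 : (∫ s in Ioc a t, ((n : ℝ) + 1 + 1) * (α s * A s ^ (n + 1)))
        = ((n : ℝ) + 1 + 1) * ∫ s in Ioc a t, α s * A s ^ (n + 1) := integral_const_mul _ _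
    have : A t ^ (n + 1 + 1) = A t * A t ^ (n + 1) := by ring
    rw [Nat.cast_succ]
    rw [this, key, e4]
    ring

lemma real_exp_tsum (x : ℝ) : Real.exp x = ∑' n : ℕ, x ^ n / (n.factorial : ℝ) := by
  rw [Real.exp_eq_exp_ℝ, NormedSpace.exp_eq_tsum_div]

lemma exp_ftc (a b : ℝ) (α : ℝ → ℝ) (hα : IntegrableOn α (Icc a b)) :
    ∀ t ∈ Icc a b, Real.exp (∫ s in Ioc a t, α s)
      = 1 + ∫ s in Ioc a t, α s * Real.exp (∫ r in Ioc a s, α r) := by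
  set A : ℝ → ℝ := fun x => ∫ s in Ioc a x, α s with hA
  have hAc : ContinuousOn A (Icc a b) := intervalIntegral.continuousOn_primitive hα
  obtain ⟨C₀, hC₀⟩ := (isCompact_Icc : IsCompact (Icc a b)).exists_bound_of_continuousOn hAc
  set C : ℝ := max C₀ 0 with hCdef
  have hC : ∀ x ∈ Icc a b, ‖A x‖ ≤ C := fun x hx => (hC₀ x hx).trans (le_max_left _ _)
  have hC0 : 0 ≤ C := le_max_right _ _
  intro t ht
  have hsubt : Icc a t ⊆ Icc a b := Icc_subset_Icc le_rfl ht.2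
  have hαt : IntegrableOn α (Icc a t) := hα.mono_set hsubt
  set f : ℕ → ℝ → ℝ := fun n s => α s * (A s ^ n / (n.factorial : ℝ)) with hf
  have hfint : ∀ n, Integrable (f n) (volume.restrict (Icc a t)) := fun n =>
    integrableOn_mul_cont t ht α (fun s => A s ^ n / (n.factorial : ℝ)) hα
      ((hAc.pow n).div_const _)
  have hnorm : ∀ n, (∫ s in Icc a t, ‖f n s‖)
      ≤ (C ^ n / (n.factorial : ℝ)) * ∫ s in Icc a t, ‖α s‖ := by
    intro n
    rw [← integral_const_mul]
    refine integral_mono_of_nonneg (Filter.Eventually.of_forall fun s => norm_nonneg _)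
      ((hαt.norm).const_mul _) ?_
    filter_upwards [ae_restrict_mem measurableSet_Icc] with s hs
    have hsb : s ∈ Icc a b := hsubt hs
    have hfac : (0:ℝ) < (n.factorial : ℝ) := Nat.cast_pos.mpr n.factorial_pos
    have h1 : ‖A s ^ n / (n.factorial : ℝ)‖ ≤ C ^ n / (n.factorial : ℝ) := by
      rw [norm_div, norm_pow, Real.norm_natCast]
      exact div_le_div_of_nonneg_right (pow_le_pow_left₀ (norm_nonneg _) (hC s hsb) n) hfac.le
    calc ‖f n s‖ = ‖α s‖ * ‖A s ^ n / (n.factorial : ℝ)‖ := norm_mul _ _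
      _ ≤ ‖α s‖ * (C ^ n / (n.factorial : ℝ)) := mul_le_mul_of_nonneg_left h1 (norm_nonneg _)
      _ = C ^ n / (n.factorial : ℝ) * ‖α s‖ := by ring
  have hsummable : Summable fun n => ∫ s in Icc a t, ‖f n s‖ := by
    refine Summable.of_nonneg_of_le (fun n => integral_nonneg fun s => norm_nonneg _)
      hnorm ?_
    simpa [div_mul_eq_mul_div] using
      ((Real.summable_pow_div_factorial C).mul_right (∫ s in Icc a t, ‖α s‖))
  have hswap := integral_tsum_of_summable_integral_norm hfint hsummable
  have hpt : ∀ s : ℝ, (∑' n : ℕ, f n s) = α s * Real.exp (A s) := by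
    intro s
    rw [hf]
    simp only
    rw [tsum_mul_left, ← real_exp_tsum]
  have hint_f : ∀ n : ℕ, (∫ s in Icc a t, f n s)
      = A t ^ (n + 1) / (((n : ℝ) + 1) * (n.factorial : ℝ)) := by
    intro n
    have hp := pow_rule a b α hα n t ht
    rw [integral_const_mul] at hp
    have hne : ((n : ℝ) + 1) ≠ 0 := by positivity
    have hI : (∫ s in Ioc a t, α s * A s ^ n) = A t ^ (n + 1) / ((n : ℝ) + 1) := by
      rw [eq_div_iff hne]; linarith [hp]
    have h2 : (∫ s in Icc a t, f n s) = (∫ s in Ioc a t, α s * A s ^ n) / (n.factorial : ℝ) := by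
      rw [integral_Icc_eq_integral_Ioc, ← integral_div]
      refine setIntegral_congr_fun measurableSet_Ioc fun s hs => ?_
      simp only [hf]; ring
    rw [h2, hI, div_div]
  have hfaccast : ∀ n : ℕ, (((n : ℝ) + 1) * (n.factorial : ℝ)) = ((n+1).factorial : ℝ) := by
    intro n; rw [Nat.factorial_succ]; push_cast; ring
  have hsum2 : (∫ s in Ioc a t, α s * Real.exp (A s)) = ∑' n : ℕ, A t ^ (n + 1) / ((n+1).factorial : ℝ) := by
    rw [← integral_Icc_eq_integral_Ioc]
    have : (∫ s in Icc a t, α s * Real.exp (A s)) = ∫ s in Icc a t, ∑' n : ℕ, f n s := by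
      refine setIntegral_congr_fun measurableSet_Icc fun s hs => ?_
      rw [hpt s]
    rw [this, ← hswap]
    congr 1
    funext n
    rw [hint_f n, hfaccast n]
  have hexp : Real.exp (A t) = 1 + ∑' n : ℕ, A t ^ (n + 1) / ((n+1).factorial : ℝ) := by
    rw [real_exp_tsum (A t), Summable.tsum_eq_zero_add (Real.summable_pow_div_factorial (A t))]
    norm_num
  rw [hsum2]
  exact hexp

lemma key_est (α β ξ d : ℝ → ℝ) (a b : ℝ) (ha : 0 < a) (hab : a ≤ b)
    (hα : IntegrableOn α (Icc a b)) (hβ : IntegrableOn β (Icc a b))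
    (hd : IntegrableOn d (Icc a b))
    (hAC : ∀ t ∈ Icc a b, ξ t = ξ a + ∫ s in Ioc a t, d s)
    (hineq : ∀ᵐ t ∂(volume.restrict (Set.Ioi (0:ℝ))), d t + α t * ξ t ≤ β t) :
    ξ b * Real.exp (∫ s in Ioc a b, α s)
      ≤ ξ a + ∫ s in Ioc a b, max (β s) 0 * Real.exp (∫ r in Ioc a s, α r) := by
  set A : ℝ → ℝ := fun x => ∫ s in Ioc a x, α s with hA
  set E : ℝ → ℝ := fun x => Real.exp (A x) with hE
  have hAc : ContinuousOn A (Icc a b) := intervalIntegral.continuousOn_primitive hα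
  have hEc : ContinuousOn E (Icc a b) := Real.continuous_exp.comp_continuousOn hAc
  have hξc : ContinuousOn ξ (Icc a b) := by
    refine ContinuousOn.congr (f := fun t => ξ a + ∫ s in Ioc a t, d s) ?_ hAC
    exact continuousOn_const.add (intervalIntegral.continuousOn_primitive hd)
  have hEa : E a = 1 := by simp [hE, hA]
  have hαE : IntegrableOn (fun s => α s * E s) (Icc a b) :=
    integrableOn_mul_cont b ⟨hab, le_rfl⟩ α E hα hEc
  have key := prod_rule a b hab d (fun s => α s * E s) ξ E hd hαE
    (fun t ht => hAC t ht)
    (fun t ht => by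
      show E t = E a + _
      rw [hEa]
      exact exp_ftc a b α hα t ht)
  rw [hEa, mul_one] at key
  -- key : ξ b * E b = ξ a + (∫ d s * E s + ∫ ξ s * (α s * E s))
  have hdE : Integrable (fun s => d s * E s) (volume.restrict (Ioc a b)) :=
    (integrableOn_mul_cont b ⟨hab, le_rfl⟩ d E hd hEc).mono_set Ioc_subset_Icc_self
  have hξαE : Integrable (fun s => ξ s * (α s * E s)) (volume.restrict (Ioc a b)) := by
    have : IntegrableOn (fun s => (α s * E s) * ξ s) (Icc a b) :=
      integrableOn_mul_cont b ⟨hab, le_rfl⟩ (fun s => α s * E s) ξ hαE hξc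
    have := this.mono_set (Ioc_subset_Icc_self (a := a) (b := b))
    simpa only [mul_comm, IntegrableOn] using this
  have hcomb : (∫ s in Ioc a b, d s * E s) + (∫ s in Ioc a b, ξ s * (α s * E s))
      = ∫ s in Ioc a b, (d s + α s * ξ s) * E s := by
    rw [← integral_add hdE hξαE]
    refine setIntegral_congr_fun measurableSet_Ioc fun s hs => ?_
    ring
  rw [hcomb] at key
  have hβE : Integrable (fun s => max (β s) 0 * E s) (volume.restrict (Ioc a b)) :=
    ((integrableOn_mul_cont b ⟨hab, le_rfl⟩ (fun s => max (β s) 0) E hβ.pos_part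
      hEc).mono_set Ioc_subset_Icc_self)
  have hintcomb : Integrable (fun s => (d s + α s * ξ s) * E s) (volume.restrict (Ioc a b)) := by
    have h1 : Integrable (fun s => (d s * E s) + ξ s * (α s * E s)) (volume.restrict (Ioc a b)) :=
      hdE.add hξαE
    refine h1.congr (Filter.Eventually.of_forall fun s => ?_)
    ring
  have hmono : (∫ s in Ioc a b, (d s + α s * ξ s) * E s)
      ≤ ∫ s in Ioc a b, max (β s) 0 * E s := by
    refine integral_mono_ae hintcomb hβE ?_
    have hsub : Ioc a b ⊆ Set.Ioi (0:ℝ) := fun x hx => lt_trans ha hx.1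
    filter_upwards [ae_restrict_of_ae_restrict_of_subset hsub hineq] with s hs
    exact mul_le_mul_of_nonneg_right (hs.trans (le_max_left _ _)) (Real.exp_pos _).le
  linarith [key, hmono]

lemma window_est (α β ξ d : ℝ → ℝ) (M : ℝ) (a b : ℝ) (ha : 0 < a) (hab : a ≤ b)
    (hα : IntegrableOn α (Icc a b)) (hβ : IntegrableOn β (Icc a b))
    (hd : IntegrableOn d (Icc a b))
    (hAC : ∀ t ∈ Icc a b, ξ t = ξ a + ∫ s in Ioc a t, d s)
    (hineq : ∀ᵐ t ∂(volume.restrict (Set.Ioi (0:ℝ))), d t + α t * ξ t ≤ β t)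
    (hMab : (∫ s in Ioc a b, max (-(α s)) 0) ≤ M) :
    ξ b ≤ Real.exp (-(∫ s in Ioc a b, α s)) * ξ a
      + Real.exp M * ∫ s in Ioc a b, max (β s) 0 := by
  set A : ℝ → ℝ := fun x => ∫ s in Ioc a x, α s with hA
  set E : ℝ → ℝ := fun x => Real.exp (A x) with hE
  have hkey := key_est α β ξ d a b ha hab hα hβ hd hAC hineq
  have hnegpart : IntegrableOn (fun r => max (-(α r)) 0) (Icc a b) := hα.neg.pos_part
  have hshift : ∀ s ∈ Ioc a b, A s - A b ≤ M := by
    intro s hs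
    have hsub1 : Ioc a s ⊆ Icc a b := Ioc_subset_Icc_self.trans (Icc_subset_Icc le_rfl hs.2)
    have hsub2 : Ioc s b ⊆ Icc a b := Ioc_subset_Icc_self.trans (Icc_subset_Icc hs.1.le le_rfl)
    have hadd : A s + (∫ r in Ioc s b, α r) = A b := by
      rw [hA]
      simp only
      rw [← setIntegral_union (Set.Ioc_disjoint_Ioc_of_le le_rfl) measurableSet_Ioc
        (hα.mono_set hsub1) (hα.mono_set hsub2), Ioc_union_Ioc_eq_Ioc hs.1.le hs.2]
    have h1 : -(∫ r in Ioc s b, α r) ≤ ∫ r in Ioc s b, max (-(α r)) 0 := by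
      rw [← integral_neg]
      exact integral_mono ((hα.mono_set hsub2).neg) (hnegpart.mono_set hsub2)
        (fun r => le_max_left _ _)
    have h2 : (∫ r in Ioc s b, max (-(α r)) 0) ≤ ∫ r in Ioc a b, max (-(α r)) 0 := by
      refine setIntegral_mono_set (hnegpart.mono_set Ioc_subset_Icc_self)
        (Filter.Eventually.of_forall fun r => le_max_right _ _)
        (HasSubset.Subset.eventuallyLE (Ioc_subset_Ioc hs.1.le le_rfl))
    linarith
  have hβp : IntegrableOn (fun s => max (β s) 0) (Icc a b) := hβ.pos_part
  have hβE : Integrable (fun s => max (β s) 0 * E s) (volume.restrict (Ioc a b)) :=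
    ((integrableOn_mul_cont b ⟨hab, le_rfl⟩ (fun s => max (β s) 0) E hβp
      (Real.continuous_exp.comp_continuousOn
        (intervalIntegral.continuousOn_primitive hα))).mono_set Ioc_subset_Icc_self)
  have step1 : ξ b ≤ (ξ a + ∫ s in Ioc a b, max (β s) 0 * E s) * Real.exp (-(A b)) := by
    have hEb : ξ b = (ξ b * E b) * Real.exp (-(A b)) := by
      rw [hE]
      simp only
      rw [Real.exp_neg, mul_assoc, mul_inv_cancel₀ (Real.exp_ne_zero _), mul_one]
    rw [hEb]
    exact mul_le_mul_of_nonneg_right hkey (Real.exp_pos _).le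
  have step2 : (∫ s in Ioc a b, max (β s) 0 * E s) * Real.exp (-(A b))
      ≤ Real.exp M * ∫ s in Ioc a b, max (β s) 0 := by
    rw [← integral_mul_const, ← integral_const_mul]
    refine setIntegral_mono_on (hβE.mul_const _)
      ((hβp.mono_set Ioc_subset_Icc_self).const_mul _) measurableSet_Ioc
      (fun s hs => ?_)
    rw [hE]
    simp only
    rw [mul_assoc, ← Real.exp_add]
    rw [mul_comm (Real.exp M) _]
    refine mul_le_mul_of_nonneg_left ?_ (le_max_right _ _)
    exact Real.exp_le_exp.mpr (by have := hshift s hs; linarith)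
  calc ξ b ≤ (ξ a + ∫ s in Ioc a b, max (β s) 0 * E s) * Real.exp (-(A b)) := step1
    _ = Real.exp (-(A b)) * ξ a + (∫ s in Ioc a b, max (β s) 0 * E s) * Real.exp (-(A b)) := by ring
    _ ≤ Real.exp (-(A b)) * ξ a + Real.exp M * ∫ s in Ioc a b, max (β s) 0 := by
        linarith [step2]

lemma exists_pos_eventually_le (u : ℝ → ℝ) (h : 0 < Filter.liminf u Filter.atTop) :
    ∃ γ > 0, ∀ᶠ t in Filter.atTop, γ ≤ u t := by
  rw [Filter.liminf_eq] at h
  set S := {a : ℝ | ∀ᶠ t in Filter.atTop, a ≤ u t} with hS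
  by_cases hne : S.Nonempty
  · by_cases hbd : BddAbove S
    · obtain ⟨γ, hγS, hγpos⟩ := (lt_csSup_iff hbd hne).mp h
      exact ⟨γ, hγpos, hγS⟩
    · obtain ⟨γ₀, hγ₀⟩ := hne
      have h1 : ¬BddAbove S := hbd
      rw [Real.sSup_of_not_bddAbove hbd] at h
      exact absurd h (lt_irrefl 0)
  · rw [Set.not_nonempty_iff_eq_empty.mp hne, Real.sSup_empty] at h
    exact absurd h (lt_irrefl 0)

lemma discrete_gronwall' (x δ : ℕ → ℝ) (q : ℝ) (hq0 : 0 ≤ q) (hq1 : q < 1)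
    (hx0 : ∀ n, 0 ≤ x n) (hδ : Filter.Tendsto δ Filter.atTop (nhds 0))
    (hrec : ∀ n, x (n + 1) ≤ q * x n + δ n) :
    Filter.Tendsto x Filter.atTop (nhds 0) := by
  rw [Metric.tendsto_atTop]
  intro ε hε
  have hq1' : 0 < 1 - q := by linarith
  obtain ⟨N, hN⟩ := (Metric.tendsto_atTop.mp hδ) ((1 - q) * (ε / 4)) (by positivity)
  have hδle : ∀ n ≥ N, δ n ≤ (1 - q) * (ε / 4) := by
    intro n hn
    have := hN n hn
    rw [Real.dist_eq, sub_zero] at this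
    exact (le_abs_self _).trans this.le
  have hind : ∀ m : ℕ, x (N + m) ≤ q ^ m * x N + ε / 4 := by
    intro m
    induction m with
    | zero => simpa using by linarith [hε]
    | succ m ih =>
      have hrec' := hrec (N + m)
      have hδ' := hδle (N + m) (Nat.le_add_right _ _)
      have : x (N + (m + 1)) = x ((N + m) + 1) := by ring_nf
      rw [this]
      calc x ((N + m) + 1) ≤ q * x (N + m) + δ (N + m) := hrec'
        _ ≤ q * (q ^ m * x N + ε / 4) + (1 - q) * (ε / 4) := by
            refine add_le_add (mul_le_mul_of_nonneg_left ih hq0) hδ'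
        _ ≤ q ^ (m + 1) * x N + ε / 4 := by
            have : q * (ε / 4) ≤ 1 * (ε / 4) := by
              refine mul_le_mul_of_nonneg_right (by linarith) (by positivity)
            ring_nf
            nlinarith [hq0, hε]
  have hpow : Filter.Tendsto (fun m : ℕ => q ^ m * x N) Filter.atTop (nhds 0) := by
    simpa using (tendsto_pow_atTop_nhds_zero_of_lt_one hq0 hq1).mul_const (x N)
  obtain ⟨m₀, hm₀⟩ := (Metric.tendsto_atTop.mp hpow) (ε / 4) (by positivity)
  refine ⟨N + m₀, fun n hn => ?_⟩
  have hmono : q ^ (n - N) * x N ≤ q ^ m₀ * x N := by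
    refine mul_le_mul_of_nonneg_right (pow_le_pow_of_le_one hq0 hq1.le ?_) (hx0 N)
    omega
  have hxn : x n ≤ q ^ (n - N) * x N + ε / 4 := by
    have := hind (n - N)
    rwa [Nat.add_sub_cancel' (le_trans (Nat.le_add_right _ _) hn)] at this
  have h1 := hm₀ m₀ le_rfl
  rw [Real.dist_eq, sub_zero] at h1
  have h2 : q ^ m₀ * x N ≤ |q ^ m₀ * x N| := le_abs_self _
  rw [Real.dist_eq, sub_zero, abs_of_nonneg (hx0 n)]
  calc x n ≤ q ^ (n - N) * x N + ε / 4 := hxn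
    _ ≤ q ^ m₀ * x N + ε / 4 := by linarith
    _ < ε / 4 + ε / 4 := by linarith
    _ < ε := by linarith
lemma negpart_integrableOn {f : ℝ → ℝ} {s : Set ℝ} (hf : IntegrableOn f s) :
    IntegrableOn (fun x => max (-(f x)) 0) s := hf.neg.pos_part

lemma pospart_integrableOn {f : ℝ → ℝ} {s : Set ℝ} (hf : IntegrableOn f s) :
    IntegrableOn (fun x => max (f x) 0) s := hf.pos_part

/-- Modified Gronwall inequality of Jones–Titi.  Absolute continuity of `ξ` on `(0,∞)`
is expressed through the fundamental theorem of calculus: `ξ b - ξ a = ∫_a^b d`,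
where `d` is a locally integrable a.e. derivative. -/
theorem stmt_7 (α β ξ d : ℝ → ℝ) (T : ℝ) (hT : 0 < T)
    (hα : LocallyIntegrableOn α (Set.Ioi 0))
    (hβ : LocallyIntegrableOn β (Set.Ioi 0))
    (hd : LocallyIntegrableOn d (Set.Ioi 0))
    (hliminf : 0 < liminf (fun t => (1 / T) * ∫ τ in t..t + T, α τ) atTop)
    (hlimsupfin : IsBoundedUnder (· ≤ ·) atTop
      (fun t => (1 / T) * ∫ τ in t..t + T, max (-α τ) 0))
    (hβplus : Tendsto (fun t => (1 / T) * ∫ τ in t..t + T, max (β τ) 0) atTop (nhds 0))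
    (hξnonneg : ∀ t ∈ Set.Ioi (0 : ℝ), 0 ≤ ξ t)
    (hAC : ∀ a ∈ Set.Ioi (0 : ℝ), ∀ b, a ≤ b → ξ b - ξ a = ∫ t in a..b, d t)
    (hineq : ∀ᵐ t ∂(volume.restrict (Set.Ioi (0 : ℝ))), d t + α t * ξ t ≤ β t) :
    Tendsto ξ atTop (nhds 0) := by
  obtain ⟨γ, hγpos, hγev⟩ := exists_pos_eventually_le _ hliminf
  obtain ⟨M₀, hM₀⟩ := hlimsupfin
  rw [Filter.eventually_map] at hM₀
  set M : ℝ := max M₀ 0 with hMdef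
  have hM0 : (0:ℝ) ≤ M := le_max_right _ _
  have hMev : ∀ᶠ t in atTop, (1 / T) * (∫ τ in t..t + T, max (-α τ) 0) ≤ M :=
    hM₀.mono fun t ht => le_trans ht (le_max_left _ _)
  obtain ⟨t₁, ht₁⟩ := Filter.eventually_atTop.mp (hγev.and hMev)
  set t₀ : ℝ := max t₁ 1 with ht₀def
  have ht₀1 : (1:ℝ) ≤ t₀ := le_max_right _ _
  have ht₀pos : (0:ℝ) < t₀ := lt_of_lt_of_le one_pos ht₀1
  -- integrability on compact subintervals
  have hIcc : ∀ (f : ℝ → ℝ), LocallyIntegrableOn f (Set.Ioi 0) → ∀ a b : ℝ, t₀ ≤ a →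
      IntegrableOn f (Icc a b) := by
    intro f hf a b hta
    refine hf.integrableOn_compact_subset (fun x hx => ?_) isCompact_Icc
    have : (0:ℝ) < a := lt_of_lt_of_le ht₀pos hta
    exact lt_of_lt_of_le this hx.1
  -- window bounds on α
  have hwinγ : ∀ t : ℝ, t₀ ≤ t → γ * T ≤ ∫ s in Ioc t (t + T), α s := by
    intro t ht
    have h := (ht₁ t (le_trans (le_max_left _ _) ht)).1
    rw [intervalIntegral.integral_of_le (by linarith)] at h
    have h2 := mul_le_mul_of_nonneg_left h hT.le
    have h3 : T * ((1 / T) * ∫ s in Ioc t (t + T), α s) = ∫ s in Ioc t (t + T), α s := by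
      field_simp
    rw [h3] at h2
    linarith
  have hwinM : ∀ t : ℝ, t₀ ≤ t → (∫ s in Ioc t (t + T), max (-(α s)) 0) ≤ M * T := by
    intro t ht
    have h := (ht₁ t (le_trans (le_max_left _ _) ht)).2
    rw [intervalIntegral.integral_of_le (by linarith)] at h
    have h2 := mul_le_mul_of_nonneg_left h hT.le
    have h3 : T * ((1 / T) * ∫ s in Ioc t (t + T), max (-(α s)) 0)
        = ∫ s in Ioc t (t + T), max (-(α s)) 0 := by field_simp
    rw [h3] at h2
    linarith
  -- β⁺ window integral tends to 0
  set εf : ℝ → ℝ := fun t => ∫ s in Ioc t (t + T), max (β s) 0 with hεfdef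
  have hεf : Tendsto εf atTop (nhds 0) := by
    have h2 := hβplus.const_mul T
    rw [mul_zero] at h2
    refine h2.congr fun t => ?_
    rw [intervalIntegral.integral_of_le (by linarith : t ≤ t + T)]
    field_simp
    rfl
  have hεf0 : ∀ t, 0 ≤ εf t :=
    fun t => setIntegral_nonneg measurableSet_Ioc fun s _ => le_max_right _ _
  -- FTC representation on windows
  have hACwin : ∀ a : ℝ, 0 < a → ∀ b : ℝ, ∀ t ∈ Icc a b, ξ t = ξ a + ∫ s in Ioc a t, d s := by
    intro a ha b t ht
    have := hAC a ha t ht.1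
    rw [intervalIntegral.integral_of_le ht.1] at this
    linarith
  -- the sequence
  set X : ℕ → ℝ := fun n => ξ (t₀ + n * T) with hXdef
  have htn : ∀ n : ℕ, t₀ ≤ t₀ + n * T := by
    intro n
    have : (0:ℝ) ≤ n * T := mul_nonneg (Nat.cast_nonneg n) hT.le
    linarith
  have htnpos : ∀ n : ℕ, (0:ℝ) < t₀ + n * T := fun n => lt_of_lt_of_le ht₀pos (htn n)
  -- subwindow bounds for α⁻ and β⁺
  have hsubM : ∀ n : ℕ, ∀ s ∈ Icc (t₀ + n * T) (t₀ + n * T + T),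
      (∫ r in Ioc (t₀ + n * T) s, max (-(α r)) 0) ≤ M * T := by
    intro n s hs
    refine le_trans ?_ (hwinM _ (htn n))
    refine setIntegral_mono_set
      ((negpart_integrableOn (hIcc _ hα _ (t₀ + n * T + T) (htn n))).mono_set Ioc_subset_Icc_self)
      (Filter.Eventually.of_forall fun r => le_max_right _ _)
      (HasSubset.Subset.eventuallyLE (Ioc_subset_Ioc le_rfl hs.2))
  have hsubβ : ∀ n : ℕ, ∀ s ∈ Icc (t₀ + n * T) (t₀ + n * T + T),
      (∫ r in Ioc (t₀ + n * T) s, max (β r) 0) ≤ εf (t₀ + n * T) := by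
    intro n s hs
    refine setIntegral_mono_set
      ((pospart_integrableOn (hIcc _ hβ _ (t₀ + n * T + T) (htn n))).mono_set Ioc_subset_Icc_self)
      (Filter.Eventually.of_forall fun r => le_max_right _ _)
      (HasSubset.Subset.eventuallyLE (Ioc_subset_Ioc le_rfl hs.2))
  -- intermediate estimate
  have hmid : ∀ n : ℕ, ∀ s ∈ Icc (t₀ + n * T) (t₀ + n * T + T),
      ξ s ≤ Real.exp (M * T) * X n + Real.exp (M * T) * εf (t₀ + n * T) := by
    intro n s hs
    set a := t₀ + n * T with hadef
    have hw := window_est α β ξ d (M * T) a s (htnpos n) hs.1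
      ((hIcc _ hα _ _ (htn n)))
      ((hIcc _ hβ _ _ (htn n)))
      ((hIcc _ hd _ _ (htn n)))
      (hACwin a (htnpos n) s) hineq
      ?hMab
    case hMab =>
      refine le_trans ?_ (hsubM n s hs)
      exact le_of_eq rfl
    -- bound the exponential factor
    have hexp1 : Real.exp (-(∫ r in Ioc a s, α r)) ≤ Real.exp (M * T) := by
      refine Real.exp_le_exp.mpr ?_
      have h1 : -(∫ r in Ioc a s, α r) ≤ ∫ r in Ioc a s, max (-(α r)) 0 := by
        rw [← integral_neg]
        refine integral_mono
          (((hIcc _ hα a s (htn n)).mono_set Ioc_subset_Icc_self).neg)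
          ((negpart_integrableOn (hIcc _ hα a s (htn n))).mono_set Ioc_subset_Icc_self)
          fun r => le_max_left _ _
      exact le_trans h1 (hsubM n s hs)
    have hξa : 0 ≤ ξ a := hξnonneg a (htnpos n)
    have h2 : Real.exp (-(∫ r in Ioc a s, α r)) * ξ a ≤ Real.exp (M * T) * ξ a :=
      mul_le_mul_of_nonneg_right hexp1 hξa
    have h3 : Real.exp (M * T) * (∫ r in Ioc a s, max (β r) 0)
        ≤ Real.exp (M * T) * εf a :=
      mul_le_mul_of_nonneg_left (hsubβ n s hs) (Real.exp_pos _).le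
    calc ξ s ≤ Real.exp (-(∫ r in Ioc a s, α r)) * ξ a
          + Real.exp (M * T) * ∫ r in Ioc a s, max (β r) 0 := hw
      _ ≤ Real.exp (M * T) * X n + Real.exp (M * T) * εf a := by
          have : ξ a = X n := rfl
          rw [← this]; exact add_le_add h2 h3
  -- recursion
  have hrec : ∀ n : ℕ, X (n + 1) ≤ Real.exp (-(γ * T)) * X n
      + Real.exp (M * T) * εf (t₀ + n * T) := by
    intro n
    set a := t₀ + n * T with hadef
    have hXn1 : X (n + 1) = ξ (a + T) := by
      rw [hXdef]
      simp only
      congr 1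
      push_cast
      ring
    have hw := window_est α β ξ d (M * T) a (a + T) (htnpos n) (by linarith)
      ((hIcc _ hα _ _ (htn n)))
      ((hIcc _ hβ _ _ (htn n)))
      ((hIcc _ hd _ _ (htn n)))
      (hACwin a (htnpos n) (a + T)) hineq
      (hwinM a (htn n))
    have hexp1 : Real.exp (-(∫ r in Ioc a (a + T), α r)) ≤ Real.exp (-(γ * T)) :=
      Real.exp_le_exp.mpr (by linarith [hwinγ a (htn n)])
    have hξa : 0 ≤ ξ a := hξnonneg a (htnpos n)
    rw [hXn1]
    calc ξ (a + T) ≤ Real.exp (-(∫ r in Ioc a (a + T), α r)) * ξ a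
          + Real.exp (M * T) * εf a := hw
      _ ≤ Real.exp (-(γ * T)) * X n + Real.exp (M * T) * εf a := by
          have : ξ a = X n := rfl
          rw [← this]
          exact add_le_add (mul_le_mul_of_nonneg_right hexp1 hξa) le_rfl
  -- δ sequence tends to zero
  have hseq : Tendsto (fun n : ℕ => t₀ + n * T) atTop atTop := by
    refine tendsto_atTop_add_const_left _ _ ?_
    exact Tendsto.atTop_mul_const hT tendsto_natCast_atTop_atTop
  have hδ : Tendsto (fun n : ℕ => Real.exp (M * T) * εf (t₀ + n * T)) atTop (nhds 0) := by
    have := (hεf.comp hseq).const_mul (Real.exp (M * T))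
    rwa [mul_zero] at this
  -- discrete Gronwall
  have hq0 : (0:ℝ) ≤ Real.exp (-(γ * T)) := (Real.exp_pos _).le
  have hq1 : Real.exp (-(γ * T)) < 1 := by
    rw [Real.exp_lt_one_iff]
    nlinarith
  have hX0 : ∀ n, 0 ≤ X n := fun n => hξnonneg _ (htnpos n)
  have hXlim : Tendsto X atTop (nhds 0) :=
    discrete_gronwall' X (fun n => Real.exp (M * T) * εf (t₀ + n * T)) _ hq0 hq1 hX0 hδ hrec
  -- combine
  have hy : Tendsto (fun n : ℕ => Real.exp (M * T) * X n
      + Real.exp (M * T) * εf (t₀ + n * T)) atTop (nhds 0) := by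
    have h1 := (hXlim.const_mul (Real.exp (M * T))).add hδ
    rwa [mul_zero, add_zero] at h1
  rw [Metric.tendsto_atTop]
  intro ε hε
  obtain ⟨n₀, hn₀⟩ := (Metric.tendsto_atTop.mp hy) ε hε
  refine ⟨t₀ + n₀ * T, fun s hs => ?_⟩
  have hst₀ : t₀ ≤ s := le_trans (htn n₀) hs
  set n : ℕ := ⌊(s - t₀) / T⌋₊ with hndef
  have hdivnn : 0 ≤ (s - t₀) / T := div_nonneg (by linarith) hT.le
  have hn₀n : n₀ ≤ n := by
    refine Nat.le_floor ?_
    rw [le_div_iff₀ hT]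
    linarith
  have hlow : t₀ + n * T ≤ s := by
    have := Nat.floor_le hdivnn
    rw [← hndef] at this
    have h2 := (le_div_iff₀ hT).mp this
    linarith
  have hhigh : s ≤ t₀ + n * T + T := by
    have := Nat.lt_floor_add_one ((s - t₀) / T)
    rw [← hndef] at this
    have h2 := (div_lt_iff₀ hT).mp this
    nlinarith
  have hξs := hmid n s ⟨hlow, hhigh⟩
  have hyn := hn₀ n hn₀n
  rw [Real.dist_eq, sub_zero] at hyn
  have hspos : (0:ℝ) < s := lt_of_lt_of_le ht₀pos hst₀
  rw [Real.dist_eq, sub_zero, abs_of_nonneg (hξnonneg s hspos)]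
  have hle : Real.exp (M * T) * X n + Real.exp (M * T) * εf (t₀ + n * T)
      ≤ |Real.exp (M * T) * X n + Real.exp (M * T) * εf (t₀ + n * T)| := le_abs_self _
  linarith [hξs]
end

section
/- Let β ≥ 0 be a constant, ν, κ₀ > 0, and let y : ℝ → [0,∞) be an absolutely continuous bounded function satisfying y'(s) + α(s)y(s) ≤ β for all s ∈ ℝ, where α is locally integrable and ∫_{s-1/(νκ₀²)}^{s} α(σ)dσ ≥ 1 for all s ∈ ℝ. Then for all s ∈ ℝ: y(s) ≤ (2β/(νκ₀²)) · sup_{0≤r≤1} exp(-∫_{s-r/(νκ₀²)}^{s} α(σ)dσ). -/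
open MeasureTheory Filter Real

set_option maxHeartbeats 2000000 in
/-- Backward Gronwall-type bound (Lemma 5.2 of the paper): if `y ≥ 0` is bounded,
differentiable with `y' + α y ≤ β` on all of `ℝ`, and `∫_{s-1/(νκ₀²)}^s α ≥ 1`
for all `s`, then
`y(s) ≤ (2β/(νκ₀²)) · sup_{0≤r≤1} exp(-∫_{s-r/(νκ₀²)}^s α)`. -/
theorem stmt_8 (β ν κ₀ : ℝ) (hβ : 0 ≤ β) (hν : 0 < ν) (hκ : 0 < κ₀)
    (y d α : ℝ → ℝ)
    (hα : LocallyIntegrable α)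
    (hy_nonneg : ∀ s, 0 ≤ y s)
    (hy_bdd : ∃ C, ∀ s, y s ≤ C)
    (hy_deriv : ∀ s, HasDerivAt y (d s) s)
    (hy_ineq : ∀ s, d s + α s * y s ≤ β)
    (hα_int : ∀ s : ℝ, 1 ≤ ∫ σ in (s - 1 / (ν * κ₀ ^ 2))..s, α σ) :
    ∀ s : ℝ, y s ≤ (2 * β / (ν * κ₀ ^ 2)) *
      ⨆ r : Set.Icc (0 : ℝ) 1,
        Real.exp (-∫ σ in (s - (r : ℝ) / (ν * κ₀ ^ 2))..s, α σ) := by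
  obtain ⟨C, hC⟩ := hy_bdd
  have hC0 : 0 ≤ C := le_trans (hy_nonneg 0) (hC 0)
  have hycont : Continuous y := by
    rw [continuous_iff_continuousAt]; exact fun t => (hy_deriv t).continuousAt
  have hαi : ∀ u v : ℝ, IntervalIntegrable α volume u v := fun u v =>
    (hα.integrableOn_isCompact isCompact_uIcc).intervalIntegrable
  intro s
  set c := ν * κ₀ ^ 2 with hc_def
  have hc : 0 < c := by positivity
  set ε := 1 / c with hε_def
  have hε : 0 < ε := by positivity
  set A : ℝ → ℝ := fun t => ∫ σ in s..t, α σ with hA_def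
  have hAcont : Continuous A := intervalIntegral.continuous_primitive hαi s
  have hAs : A s = 0 := intervalIntegral.integral_same
  have hsub : ∀ u v : ℝ, (∫ σ in u..v, α σ) = A v - A u := fun u v =>
    (intervalIntegral.integral_interval_sub_left (hαi s v) (hαi s u)).symm
  have h1 : ∀ t : ℝ, 1 ≤ A t - A (t - ε) := by
    intro t
    have h := hα_int t
    rwa [hsub] at h
  have LemA : ∀ (k : ℕ) (t : ℝ), (k : ℝ) ≤ A t - A (t - k * ε) := by
    intro k
    induction k with
    | zero => intro t; simp
    | succ n ih =>
      intro t
      have h2 := ih (t - ε)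
      have h3 := h1 t
      have he : t - (↑(n + 1)) * ε = t - ε - n * ε := by push_cast; ring
      rw [he]; push_cast; linarith
  set M := ⨆ r : Set.Icc (0 : ℝ) 1,
      Real.exp (-∫ σ in (s - (r : ℝ) / c)..s, α σ) with hM_def
  have hfam : ∀ r : ℝ, Real.exp (-∫ σ in (s - r / c)..s, α σ) = Real.exp (A (s - r / c)) := by
    intro r
    rw [hsub, hAs]
    norm_num
  have hbdd : BddAbove (Set.range fun r : Set.Icc (0 : ℝ) 1 =>
      Real.exp (-∫ σ in (s - (r : ℝ) / c)..s, α σ)) := by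
    have hco : Continuous (fun r : ℝ => Real.exp (-∫ σ in (s - r / c)..s, α σ)) := by
      have heq : (fun r : ℝ => Real.exp (-∫ σ in (s - r / c)..s, α σ))
          = fun r : ℝ => Real.exp (A (s - r / c)) := funext hfam
      rw [heq]
      exact Real.continuous_exp.comp (hAcont.comp (continuous_const.sub (continuous_id.div_const c)))
    have hr : (Set.range fun r : Set.Icc (0 : ℝ) 1 =>
        Real.exp (-∫ σ in (s - (r : ℝ) / c)..s, α σ))
        = (fun r : ℝ => Real.exp (-∫ σ in (s - r / c)..s, α σ)) '' Set.Icc 0 1 := by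
      ext x
      constructor
      · rintro ⟨⟨r, hri⟩, rfl⟩; exact ⟨r, hri, rfl⟩
      · rintro ⟨r, hri, rfl⟩; exact ⟨⟨r, hri⟩, rfl⟩
    rw [hr]
    exact (isCompact_Icc.image hco).bddAbove
  have hMle : ∀ t, t ∈ Set.Icc (s - ε) s → Real.exp (A t) ≤ M := by
    intro t ht
    have hr1 : (s - t) * c ∈ Set.Icc (0 : ℝ) 1 := by
      constructor
      · nlinarith [ht.2]
      · have h' : s - t ≤ ε := by linarith [ht.1]
        have : (s - t) * c ≤ ε * c := by nlinarith
        have hεc : ε * c = 1 := by rw [hε_def]; field_simp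
        linarith
    have harg : s - ((s - t) * c) / c = t := by field_simp; ring
    have he2 : Real.exp (A t) = Real.exp
        (-∫ σ in (s - ((⟨(s - t) * c, hr1⟩ : Set.Icc (0 : ℝ) 1) : ℝ) / c)..s, α σ) := by
      rw [hfam]
      norm_num [harg]
    rw [he2, hM_def]
    exact le_ciSup hbdd _
  have hM1 : (1 : ℝ) ≤ M := by
    have h := hMle s ⟨by linarith, le_refl s⟩
    rwa [hAs, Real.exp_zero] at h
  have hM0 : (0 : ℝ) < M := lt_of_lt_of_le one_pos hM1
  have hLayer : ∀ (k : ℕ) (t : ℝ), t ∈ Set.Icc (s - ((k : ℝ) + 1) * ε) (s - (k : ℝ) * ε) →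
      Real.exp (A t) ≤ Real.exp (-(k : ℝ)) * M := by
    intro k t ht
    have h2 : (k : ℝ) ≤ A (t + k * ε) - A t := by
      have h := LemA k (t + k * ε)
      have he : t + (k : ℝ) * ε - k * ε = t := by ring
      rwa [he] at h
    have h3 : t + (k : ℝ) * ε ∈ Set.Icc (s - ε) s := by
      constructor
      · have := ht.1; nlinarith
      · have := ht.2; nlinarith
    calc Real.exp (A t) ≤ Real.exp (-(k : ℝ) + A (t + k * ε)) := by
          apply Real.exp_le_exp.2; linarith
      _ = Real.exp (-(k : ℝ)) * Real.exp (A (t + k * ε)) := Real.exp_add _ _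
      _ ≤ Real.exp (-(k : ℝ)) * M :=
          mul_le_mul_of_nonneg_left (hMle _ h3) (Real.exp_pos _).le
  have hCover : ∀ (N : ℕ) (t : ℝ), t ∈ Set.Icc (s - (N : ℝ) * ε) s → Real.exp (A t) ≤ M := by
    intro N
    induction N with
    | zero =>
      intro t ht
      have h0 : t = s := le_antisymm ht.2 (by simpa using ht.1)
      rw [h0, hAs, Real.exp_zero]; exact hM1
    | succ n ih =>
      intro t ht
      rcases le_or_gt (s - (n : ℝ) * ε) t with h | h
      · exact ih t ⟨h, ht.2⟩
      · have hmem : t ∈ Set.Icc (s - ((n : ℝ) + 1) * ε) (s - (n : ℝ) * ε) := by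
          constructor
          · have := ht.1; push_cast at this ⊢; linarith
          · exact h.le
        have h4 := hLayer n t hmem
        have h5 : Real.exp (-(n : ℝ)) ≤ 1 := by
          rw [← Real.exp_zero]
          apply Real.exp_le_exp.2
          simp
        nlinarith
  have key : ∀ (N : ℕ) (δ : ℝ), 0 < δ →
      y s ≤ C * Real.exp δ * Real.exp (-(N : ℝ)) * M
          + β * ε * Real.exp δ * M * (1 - Real.exp (-1))⁻¹
          + C * Real.exp δ * M * δ := by
    intro N δ hδ
    set a := s - (N : ℝ) * ε with ha_def
    have has : a ≤ s := by
      rw [ha_def]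
      have : 0 ≤ (N : ℝ) * ε := by positivity
      linarith
    have hαIcc : IntegrableOn α (Set.Icc a s) := hα.integrableOn_isCompact isCompact_Icc
    have hf : Integrable ((Set.Icc a s).indicator α) :=
      (integrable_indicator_iff measurableSet_Icc).2 hαIcc
    obtain ⟨g, -, hgδ, hgc, hgi⟩ := hf.exists_hasCompactSupport_integral_sub_le hδ
    have hgIcc : IntegrableOn g (Set.Icc a s) := hgc.integrableOn_Icc
    have habs : IntegrableOn (fun x => |α x - g x|) (Set.Icc a s) := (hαIcc.sub hgIcc).abs
    have habs' : IntegrableOn (fun x => |g x - α x|) (Set.Icc a s) := (hgIcc.sub hαIcc).abs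
    have herr0 : ∫ x in Set.Icc a s, |α x - g x| ≤ δ := by
      have h6 : ∫ x in Set.Icc a s, |α x - g x|
          = ∫ x in Set.Icc a s, ‖(Set.Icc a s).indicator α x - g x‖ := by
        apply setIntegral_congr_fun measurableSet_Icc
        intro x hx
        show |α x - g x| = ‖(Set.Icc a s).indicator α x - g x‖
        rw [Set.indicator_of_mem hx, Real.norm_eq_abs]
      rw [h6]
      calc (∫ x in Set.Icc a s, ‖(Set.Icc a s).indicator α x - g x‖)
          ≤ ∫ x, ‖(Set.Icc a s).indicator α x - g x‖ :=
            setIntegral_le_integral (hf.sub hgi).norm (ae_of_all _ fun x => norm_nonneg _)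
        _ ≤ δ := hgδ
    have herr : ∀ u, a ≤ u → u ≤ s → (∫ σ in u..s, (α σ - g σ)) ≤ δ := by
      intro u hu hus
      have h7 : (∫ σ in u..s, (α σ - g σ)) ≤ |∫ σ in u..s, (α σ - g σ)| := le_abs_self _
      have h8 : |∫ σ in u..s, (α σ - g σ)| ≤ ∫ σ in u..s, |α σ - g σ| :=
        intervalIntegral.abs_integral_le_integral_abs hus
      have h9 : (∫ σ in u..s, |α σ - g σ|) ≤ ∫ x in Set.Icc a s, |α x - g x| := by
        rw [intervalIntegral.integral_of_le hus]
        apply setIntegral_mono_set habs (ae_of_all _ fun x => abs_nonneg _)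
        exact ((Set.Ioc_subset_Icc_self).trans (Set.Icc_subset_Icc hu le_rfl)).eventuallyLE
      linarith
    set B : ℝ → ℝ := fun t => ∫ σ in s..t, g σ with hB_def
    have hB : ∀ t, HasDerivAt B (g t) t := fun t => (hgc.integral_hasStrictDerivAt s t).hasDerivAt
    have hBcont : Continuous B := by
      rw [continuous_iff_continuousAt]; exact fun t => (hB t).continuousAt
    have hBs : B s = 0 := intervalIntegral.integral_same
    set w : ℝ → ℝ := fun t => Real.exp (B t) with hw_def
    have hw : ∀ t, HasDerivAt w (Real.exp (B t) * g t) t := fun t => (hB t).exp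
    have hwcont : Continuous w := Real.continuous_exp.comp hBcont
    have hwpos : ∀ t, 0 < w t := fun t => Real.exp_pos _
    have hws : w s = 1 := by rw [hw_def]; simp [hBs]
    have hBA : ∀ t, a ≤ t → t ≤ s → B t ≤ A t + δ := by
      intro t hat hts
      have h10 : A t - B t = ∫ σ in s..t, (α σ - g σ) :=
        (intervalIntegral.integral_sub (hαi s t) (hgc.intervalIntegrable s t)).symm
      have h11 : (∫ σ in s..t, (α σ - g σ)) = -∫ σ in t..s, (α σ - g σ) :=
        intervalIntegral.integral_symm t s
      have h12 := herr t hat hts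
      rw [h11] at h10
      linarith
    have hwA : ∀ t, a ≤ t → t ≤ s → w t ≤ Real.exp δ * Real.exp (A t) := by
      intro t hat hts
      calc w t = Real.exp (B t) := by rw [hw_def]
        _ ≤ Real.exp (A t + δ) := Real.exp_le_exp.2 (hBA t hat hts)
        _ = Real.exp δ * Real.exp (A t) := by rw [← Real.exp_add]; ring_nf
    set G : ℝ → ℝ := fun t => y t * w t with hG_def
    have hGcont : Continuous G := hycont.mul hwcont
    have hGderiv : ∀ t, HasDerivAt G (d t * w t + y t * (Real.exp (B t) * g t)) t :=
      fun t => (hy_deriv t).mul (hw t)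
    set φ : ℝ → ℝ := fun t => (β + |g t - α t| * C) * w t with hφ_def
    have hinner : IntegrableOn (fun t => β + |g t - α t| * C) (Set.Icc a s) := by
      apply Integrable.add
      · exact integrableOn_const measure_Icc_lt_top.ne
      · exact habs'.mul_const C
    have hφint : IntegrableOn φ (Set.Icc a s) :=
      MeasureTheory.IntegrableOn.mul_continuousOn hinner hwcont.continuousOn isCompact_Icc
    have hFTC : G s - G a ≤ ∫ t in a..s, φ t := by
      apply intervalIntegral.sub_le_integral_of_hasDeriv_right_of_le has hGcont.continuousOn
          (fun x _ => (hGderiv x).hasDerivWithinAt) hφint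
      intro x _
      have h13 := hy_ineq x
      have h14 : (g x - α x) * y x ≤ |g x - α x| * C := by
        calc (g x - α x) * y x ≤ |g x - α x| * y x :=
              mul_le_mul_of_nonneg_right (le_abs_self _) (hy_nonneg x)
          _ ≤ |g x - α x| * C := mul_le_mul_of_nonneg_left (hC x) (abs_nonneg _)
      have h15 : d x + g x * y x ≤ β + |g x - α x| * C := by
        have he : d x + g x * y x = (d x + α x * y x) + (g x - α x) * y x := by ring
        linarith
      calc d x * w x + y x * (Real.exp (B x) * g x) = (d x + g x * y x) * w x := by
            simp only [hw_def]; ring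
        _ ≤ (β + |g x - α x| * C) * w x := mul_le_mul_of_nonneg_right h15 (hwpos x).le
        _ = φ x := by rw [hφ_def]
    have hstep : y s ≤ y a * w a + ∫ t in a..s, φ t := by
      have hGs : G s = y s := by rw [hG_def]; simp [hws]
      have hGa : G a = y a * w a := by rw [hG_def]
      rw [hGs, hGa] at hFTC
      linarith
    have hAa : A a ≤ -(N : ℝ) := by
      have h := LemA N s
      rw [hAs] at h
      rw [ha_def]
      linarith
    have hwa : w a ≤ Real.exp δ * Real.exp (-(N : ℝ)) := by
      calc w a ≤ Real.exp δ * Real.exp (A a) := hwA a le_rfl has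
        _ ≤ Real.exp δ * Real.exp (-(N : ℝ)) :=
            mul_le_mul_of_nonneg_left (Real.exp_le_exp.2 hAa) (Real.exp_pos _).le
    have hbdry : y a * w a ≤ C * Real.exp δ * Real.exp (-(N : ℝ)) * M := by
      have hb1 : y a * w a ≤ C * (Real.exp δ * Real.exp (-(N : ℝ))) :=
        mul_le_mul (hC a) hwa (hwpos a).le hC0
      calc y a * w a ≤ C * (Real.exp δ * Real.exp (-(N : ℝ))) := hb1
        _ = C * Real.exp δ * Real.exp (-(N : ℝ)) * 1 := by ring
        _ ≤ C * Real.exp δ * Real.exp (-(N : ℝ)) * M :=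
            mul_le_mul_of_nonneg_left hM1 (by positivity)
    have hwM : ∀ t, t ∈ Set.Icc a s → w t ≤ Real.exp δ * M := by
      intro t ht
      have h18 : Real.exp (A t) ≤ M := hCover N t (by rw [ha_def] at ht; exact ht)
      calc w t ≤ Real.exp δ * Real.exp (A t) := hwA t ht.1 ht.2
        _ ≤ Real.exp δ * M := mul_le_mul_of_nonneg_left h18 (Real.exp_pos δ).le
    have hii1 : IntervalIntegrable (fun t => β * w t) volume a s :=
      (continuous_const.mul hwcont).intervalIntegrable a s
    have hii2' : IntegrableOn (fun t => |g t - α t| * C * w t) (Set.Icc a s) :=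
      MeasureTheory.IntegrableOn.mul_continuousOn (habs'.mul_const C)
        hwcont.continuousOn isCompact_Icc
    have hii2 : IntervalIntegrable (fun t => |g t - α t| * C * w t) volume a s := by
      apply IntegrableOn.intervalIntegrable
      rwa [Set.uIcc_of_le has]
    have hsplit : (∫ t in a..s, φ t)
        = (∫ t in a..s, β * w t) + ∫ t in a..s, |g t - α t| * C * w t := by
      rw [← intervalIntegral.integral_add hii1 hii2]
      apply intervalIntegral.integral_congr
      intro t _
      simp only [hφ_def, hw_def]
      ring
    have hT2 : (∫ t in a..s, |g t - α t| * C * w t) ≤ C * Real.exp δ * M * δ := by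
      have hK0 : 0 ≤ C * (Real.exp δ * M) := by positivity
      have hiiK : IntervalIntegrable (fun t => |g t - α t| * (C * (Real.exp δ * M)))
          volume a s := by
        apply IntegrableOn.intervalIntegrable
        rw [Set.uIcc_of_le has]
        exact habs'.mul_const _
      have hmono : (∫ t in a..s, |g t - α t| * C * w t)
          ≤ ∫ t in a..s, |g t - α t| * (C * (Real.exp δ * M)) := by
        apply intervalIntegral.integral_mono_on has hii2 hiiK
        intro t ht
        have h19 := hwM t ht
        have h20 : |g t - α t| * C * w t ≤ |g t - α t| * C * (Real.exp δ * M) :=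
          mul_le_mul_of_nonneg_left h19 (mul_nonneg (abs_nonneg _) hC0)
        calc |g t - α t| * C * w t ≤ |g t - α t| * C * (Real.exp δ * M) := h20
          _ = |g t - α t| * (C * (Real.exp δ * M)) := by ring
      have hint_abs : (∫ t in a..s, |g t - α t|) ≤ δ := by
        rw [intervalIntegral.integral_of_le has]
        have hmm : (∫ t in Set.Ioc a s, |g t - α t|) ≤ ∫ x in Set.Icc a s, |α x - g x| := by
          have hcong : (fun x => |g x - α x|) = fun x => |α x - g x| := by
            funext x; exact abs_sub_comm _ _
          rw [hcong]
          exact setIntegral_mono_set habs (ae_of_all _ fun x => abs_nonneg _)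
            Set.Ioc_subset_Icc_self.eventuallyLE
        linarith
      have hml : (∫ t in a..s, |g t - α t| * (C * (Real.exp δ * M)))
          = (∫ t in a..s, |g t - α t|) * (C * (Real.exp δ * M)) :=
        intervalIntegral.integral_mul_const _ _
      calc (∫ t in a..s, |g t - α t| * C * w t)
          ≤ (∫ t in a..s, |g t - α t|) * (C * (Real.exp δ * M)) := by rw [← hml]; exact hmono
        _ ≤ δ * (C * (Real.exp δ * M)) := mul_le_mul_of_nonneg_right hint_abs hK0
        _ = C * Real.exp δ * M * δ := by ring
    set q : ℕ → ℝ := fun i => s - (N : ℝ) * ε + i * ε with hq_def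
    have hq0 : q 0 = a := by rw [hq_def, ha_def]; norm_num
    have hqN : q N = s := by rw [hq_def]; ring
    have hsum : (∫ t in a..s, w t) = ∑ i ∈ Finset.range N, ∫ t in (q i)..(q (i + 1)), w t := by
      rw [← hq0, ← hqN]
      exact (intervalIntegral.sum_integral_adjacent_intervals
        (fun i _ => hwcont.intervalIntegrable _ _)).symm
    have hcell : ∀ i, i < N → (∫ t in (q i)..(q (i + 1)), w t)
        ≤ ε * (Real.exp δ * (Real.exp (-((N - 1 - i : ℕ) : ℝ)) * M)) := by
      intro i hi
      have hks : N - 1 - i = N - (i + 1) := by omega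
      have hkcast : ((N - 1 - i : ℕ) : ℝ) = (N : ℝ) - 1 - i := by
        rw [hks, Nat.cast_sub hi]
        push_cast; ring
      have hqi : a ≤ q i := by
        simp only [hq_def, ha_def]
        have h0' : (0 : ℝ) ≤ (i : ℝ) * ε := by positivity
        linarith
      have hqi1 : q (i + 1) ≤ s := by
        simp only [hq_def]
        have hiN : ((i : ℝ) + 1) ≤ (N : ℝ) := by exact_mod_cast hi
        have h0' : ((i : ℝ) + 1) * ε ≤ (N : ℝ) * ε := mul_le_mul_of_nonneg_right hiN hε.le
        push_cast
        linarith
      have hqq : q i ≤ q (i + 1) := by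
        simp only [hq_def]
        have h0' : ((i : ℝ)) * ε + ε = ((i : ℝ) + 1) * ε := by ring
        push_cast
        linarith [hε.le]
      have hcellb : ∀ t, t ∈ Set.Icc (q i) (q (i + 1)) →
          w t ≤ Real.exp δ * (Real.exp (-((N - 1 - i : ℕ) : ℝ)) * M) := by
        intro t ht
        have htas : t ∈ Set.Icc a s := ⟨le_trans hqi ht.1, le_trans ht.2 hqi1⟩
        have e1 : s - (((N - 1 - i : ℕ) : ℝ) + 1) * ε = q i := by
          rw [hkcast]; simp only [hq_def]; push_cast; ring
        have e2 : s - ((N - 1 - i : ℕ) : ℝ) * ε = q (i + 1) := by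
          rw [hkcast]; simp only [hq_def]; push_cast; ring
        have hmem : t ∈ Set.Icc (s - (((N - 1 - i : ℕ) : ℝ) + 1) * ε)
            (s - ((N - 1 - i : ℕ) : ℝ) * ε) := by
          rw [Set.mem_Icc, e1, e2]
          exact ht
        have h21 := hLayer (N - 1 - i) t hmem
        calc w t ≤ Real.exp δ * Real.exp (A t) := hwA t htas.1 htas.2
          _ ≤ Real.exp δ * (Real.exp (-((N - 1 - i : ℕ) : ℝ)) * M) :=
              mul_le_mul_of_nonneg_left h21 (Real.exp_pos δ).le
      have hlen : q (i + 1) - q i = ε := by rw [hq_def]; push_cast; ring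
      have hmono2 := intervalIntegral.integral_mono_on hqq
        (hwcont.intervalIntegrable _ _) (intervalIntegrable_const (μ := volume)
          (c := Real.exp δ * (Real.exp (-((N - 1 - i : ℕ) : ℝ)) * M))) hcellb
      rw [intervalIntegral.integral_const, hlen, smul_eq_mul] at hmono2
      exact hmono2
    have hT1 : (∫ t in a..s, β * w t) ≤ β * ε * Real.exp δ * M * (1 - Real.exp (-1))⁻¹ := by
      have hgeom : ∀ i : ℕ, Real.exp (-(i : ℝ)) = (Real.exp (-1)) ^ i := by
        intro i
        rw [← Real.exp_nat_mul]
        congr 1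
        push_cast; ring
      have hlt : Real.exp (-1) < 1 := by
        rw [← Real.exp_zero]
        exact Real.exp_lt_exp.2 (by norm_num)
      have hS : (∑ i ∈ Finset.range N, Real.exp (-(i : ℝ))) ≤ (1 - Real.exp (-1))⁻¹ := by
        simp_rw [hgeom]
        have hsum_le := Summable.sum_le_tsum (Finset.range N)
          (fun k _ => pow_nonneg (Real.exp_pos _).le k)
          (summable_geometric_of_lt_one (Real.exp_pos _).le hlt)
        rwa [tsum_geometric_of_lt_one (Real.exp_pos _).le hlt] at hsum_le
      have hwsum : (∫ t in a..s, w t) ≤ ε * Real.exp δ * M * (1 - Real.exp (-1))⁻¹ := by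
        rw [hsum]
        calc (∑ i ∈ Finset.range N, ∫ t in (q i)..(q (i + 1)), w t)
            ≤ ∑ i ∈ Finset.range N, ε * (Real.exp δ * (Real.exp (-((N - 1 - i : ℕ) : ℝ)) * M)) :=
              Finset.sum_le_sum (fun i hi => hcell i (Finset.mem_range.1 hi))
          _ = ε * Real.exp δ * M * ∑ i ∈ Finset.range N, Real.exp (-((N - 1 - i : ℕ) : ℝ)) := by
              rw [Finset.mul_sum]
              apply Finset.sum_congr rfl
              intros; ring
          _ = ε * Real.exp δ * M * ∑ i ∈ Finset.range N, Real.exp (-(i : ℝ)) := by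
              congr 1
              exact Finset.sum_range_reflect (fun j => Real.exp (-(j : ℝ))) N
          _ ≤ ε * Real.exp δ * M * (1 - Real.exp (-1))⁻¹ := by
              apply mul_le_mul_of_nonneg_left hS (by positivity)
      rw [intervalIntegral.integral_const_mul]
      calc β * ∫ t in a..s, w t ≤ β * (ε * Real.exp δ * M * (1 - Real.exp (-1))⁻¹) :=
            mul_le_mul_of_nonneg_left hwsum hβ
        _ = β * ε * Real.exp δ * M * (1 - Real.exp (-1))⁻¹ := by ring
    rw [hsplit] at hstep
    linarith
  clear_value A M
  have hexp5 : Real.exp (1 / 5 : ℝ) ≤ 5 / 4 := by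
    have h := Real.add_one_le_exp (-(1 / 5) : ℝ)
    have hpos : (0 : ℝ) < Real.exp (-(1 / 5) : ℝ) := Real.exp_pos _
    have he : Real.exp (1 / 5 : ℝ) = (Real.exp (-(1 / 5) : ℝ))⁻¹ := by
      rw [← Real.exp_neg]; norm_num
    rw [he]
    have h45 : (4 / 5 : ℝ) ≤ Real.exp (-(1 / 5) : ℝ) := by linarith
    calc (Real.exp (-(1 / 5) : ℝ))⁻¹ ≤ ((4 : ℝ) / 5)⁻¹ :=
          inv_anti₀ (by norm_num) h45
      _ = 5 / 4 := by norm_num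
  have hexpneg1 : Real.exp (-1 : ℝ) ≤ 3 / 8 := by
    rw [Real.exp_neg]
    have h83 : (8 : ℝ) / 3 ≤ Real.exp 1 := by
      have := Real.exp_one_gt_d9
      nlinarith
    calc (Real.exp 1)⁻¹ ≤ ((8 : ℝ) / 3)⁻¹ := inv_anti₀ (by norm_num) h83
      _ = 3 / 8 := by norm_num
  have hinvpos : (0 : ℝ) < 1 - Real.exp (-1) := by linarith
  have hinv : (1 - Real.exp (-1) : ℝ)⁻¹ ≤ 8 / 5 := by
    calc (1 - Real.exp (-1) : ℝ)⁻¹ ≤ ((5 : ℝ) / 8)⁻¹ :=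
          inv_anti₀ (by norm_num) (by linarith)
      _ = 8 / 5 := by norm_num
  refine le_of_forall_pos_le_add fun η hη => ?_
  set D := (C + 1) * (M + 1) with hD_def
  have hD : 0 < D := by rw [hD_def]; nlinarith
  set δ := min (1 / 5 : ℝ) (η / (4 * D)) with hδ_def
  have hδpos : 0 < δ := lt_min (by norm_num) (by positivity)
  have hδ5 : δ ≤ 1 / 5 := min_le_left _ _
  have hδD : δ ≤ η / (4 * D) := min_le_right _ _
  set N := ⌈4 * D / η⌉₊ with hN_def
  have hNe : Real.exp (-(N : ℝ)) ≤ η / (4 * D) := by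
    have h21 : (N : ℝ) + 1 ≤ Real.exp (N : ℝ) := Real.add_one_le_exp _
    have h22 : 4 * D / η ≤ (N : ℝ) := Nat.le_ceil _
    have h23 : 4 * D / η ≤ Real.exp (N : ℝ) := by linarith
    have h24 : (0 : ℝ) < 4 * D / η := by positivity
    rw [Real.exp_neg]
    calc (Real.exp (N : ℝ))⁻¹ ≤ (4 * D / η)⁻¹ := inv_anti₀ h24 h23
      _ = η / (4 * D) := by rw [inv_div]
  have hkey := key N δ hδpos
  clear_value D δ N
  have hexpδ : Real.exp δ ≤ 5 / 4 := le_trans (Real.exp_le_exp.2 hδ5) hexp5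
  have hexpδ0 : (0 : ℝ) < Real.exp δ := Real.exp_pos _
  have hCM : C * M ≤ D := by
    rw [hD_def]
    have hh1 : C * M ≤ (C + 1) * M :=
      mul_le_mul_of_nonneg_right (by linarith) (by linarith)
    have hh2 : (C + 1) * M ≤ (C + 1) * (M + 1) :=
      mul_le_mul_of_nonneg_left (by linarith) (by linarith)
    linarith
  have hCM0 : (0 : ℝ) ≤ C * M := by positivity
  -- term 1 (boundary)
  have b2 : Real.exp δ * Real.exp (-(N : ℝ)) ≤ (5 / 4) * (η / (4 * D)) :=
    mul_le_mul hexpδ hNe (Real.exp_pos _).le (by norm_num)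
  have b3 : (C * M) * (Real.exp δ * Real.exp (-(N : ℝ))) ≤ D * ((5 / 4) * (η / (4 * D))) :=
    mul_le_mul hCM b2 (by positivity) hD.le
  have b4 : D * ((5 / 4) * (η / (4 * D))) = (5 / 16) * η := by
    have b4' : D * ((5 / 4) * (η / (4 * D))) = (5 / 16) * η * (D / D) := by ring
    rw [b4', div_self (ne_of_gt hD), mul_one]
  have e1 : C * Real.exp δ * Real.exp (-(N : ℝ)) * M ≤ (5 / 16) * η := by
    have b0 : C * Real.exp δ * Real.exp (-(N : ℝ)) * M
        = (C * M) * (Real.exp δ * Real.exp (-(N : ℝ))) := by ring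
    rw [b0]
    linarith only [b3, b4]
  -- term 3 (approximation error)
  have b5 : Real.exp δ * δ ≤ (5 / 4) * (η / (4 * D)) :=
    mul_le_mul hexpδ hδD hδpos.le (by norm_num)
  have b6 : (C * M) * (Real.exp δ * δ) ≤ D * ((5 / 4) * (η / (4 * D))) :=
    mul_le_mul hCM b5 (by positivity) hD.le
  have e3 : C * Real.exp δ * M * δ ≤ (5 / 16) * η := by
    have b0 : C * Real.exp δ * M * δ = (C * M) * (Real.exp δ * δ) := by ring
    rw [b0]
    linarith only [b6, b4]
  -- term 2 (main)
  have b7 : Real.exp δ * (1 - Real.exp (-1))⁻¹ ≤ 2 := by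
    calc Real.exp δ * (1 - Real.exp (-1))⁻¹ ≤ (5 / 4) * (8 / 5) :=
          mul_le_mul hexpδ hinv (by positivity) (by norm_num)
      _ = 2 := by norm_num
  have e2 : β * ε * Real.exp δ * M * (1 - Real.exp (-1))⁻¹ ≤ 2 * β / c * M := by
    have b0 : β * ε * Real.exp δ * M * (1 - Real.exp (-1))⁻¹
        = (β * ε * M) * (Real.exp δ * (1 - Real.exp (-1))⁻¹) := by ring
    have b1 : (β * ε * M) * (Real.exp δ * (1 - Real.exp (-1))⁻¹) ≤ (β * ε * M) * 2 :=
      mul_le_mul_of_nonneg_left b7 (by positivity)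
    have b8 : (β * ε * M) * 2 = 2 * β / c * M := by
      rw [hε_def]
      ring
    rw [b0]
    linarith only [b1, b8]
  linarith only [hkey, e1, e2, e3, hη]
end
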